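/- arXiv:2102.02092 — 2 statements merged into one kernel-verified Lean document; each statement's English description precedes it below -/
import Mathlib

section
/- Let T be large, 2 ≤ x ≤ T, and m a natural number with x^m ≤ T / log T. Then for any complex numbers a(p), (1/T) ∫_T^{2T} |∑_{p ≤ x} a(p) p^{-1/2 - it}|^{2m} dt ≪ m! (∑_{p ≤ x} |a(p)|²/p)^m, with an absolute implied constant. -/
open Finset

lemma prod_natCast_cpow {ι : Type*} (s : Finset ι) (f : ι → ℕ) (z : ℂ) :
    ((∏ i ∈ s, f i : ℕ) : ℂ) ^ z = ∏ i ∈ s, ((f i : ℕ) : ℂ) ^ z := by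
  classical
  induction s using Finset.induction with
  | empty => simp
  | insert _ _ h ih =>
      rw [Finset.prod_insert h, Finset.prod_insert h, Nat.cast_mul,
        Complex.natCast_mul_natCast_cpow, ih]

lemma exists_perm_of_prod_eq {m : ℕ} {r q : Fin m → ℕ}
    (hr : ∀ i, (r i).Prime) (hq : ∀ i, (q i).Prime)
    (h : ∏ i, r i = ∏ i, q i) : ∃ σ : Equiv.Perm (Fin m), r = q ∘ σ := by
  have key : ∀ (f : Fin m → ℕ), (∀ i, (f i).Prime) →
      List.Perm (List.ofFn f) (Nat.primeFactorsList (∏ i, f i)) := by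
    intro f hf
    refine Nat.primeFactorsList_unique (by rw [List.prod_ofFn]) ?_
    intro p hp
    obtain ⟨i, rfl⟩ := List.mem_ofFn.mp hp
    exact hf i
  have hperm : List.Perm (List.ofFn r) (List.ofFn q) :=
    ((key r hr).trans (h ▸ (key q hq).symm))
  have hsorted : r ∘ Tuple.sort r = q ∘ Tuple.sort q := by
    apply List.ofFn_injective
    refine List.Perm.eq_of_sortedLE
      (Tuple.monotone_sort r).sortedLE_ofFn (Tuple.monotone_sort q).sortedLE_ofFn ?_
    exact ((Equiv.Perm.ofFn_comp_perm _ r).trans hperm).trans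
      (Equiv.Perm.ofFn_comp_perm _ q).symm
  refine ⟨(Tuple.sort r).symm.trans (Tuple.sort q), funext fun i => ?_⟩
  have := congrFun hsorted ((Tuple.sort r).symm i)
  simpa using this

lemma eq_comp_sort_perm {m : ℕ} {r q : Fin m → ℕ}
    (hr : ∀ i, (r i).Prime) (hq : ∀ i, (q i).Prime)
    (h : ∏ i, r i = ∏ i, q i) :
    r = q ∘ ((Tuple.sort r).symm.trans (Tuple.sort q)) := by
  have key : ∀ (f : Fin m → ℕ), (∀ i, (f i).Prime) →
      List.Perm (List.ofFn f) (Nat.primeFactorsList (∏ i, f i)) := by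
    intro f hf
    refine Nat.primeFactorsList_unique (by rw [List.prod_ofFn]) ?_
    intro p hp
    obtain ⟨i, rfl⟩ := List.mem_ofFn.mp hp
    exact hf i
  have hperm : List.Perm (List.ofFn r) (List.ofFn q) :=
    ((key r hr).trans (h ▸ (key q hq).symm))
  have hsorted : r ∘ Tuple.sort r = q ∘ Tuple.sort q := by
    apply List.ofFn_injective
    refine List.Perm.eq_of_sortedLE
      (Tuple.monotone_sort r).sortedLE_ofFn (Tuple.monotone_sort q).sortedLE_ofFn ?_
    exact ((Equiv.Perm.ofFn_comp_perm _ r).trans hperm).trans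
      (Equiv.Perm.ofFn_comp_perm _ q).symm
  funext i
  have := congrFun hsorted ((Tuple.sort r).symm i)
  simpa using this

lemma card_fiber_le {m : ℕ} (Q : Finset (Fin m → ℕ)) (hQ : ∀ q ∈ Q, ∀ i, (q i).Prime)
    (n : ℕ) : (Q.filter (fun r => ∏ i, r i = n)).card ≤ m.factorial := by
  classical
  set F := Q.filter (fun r => ∏ i, r i = n) with hF
  rcases F.eq_empty_or_nonempty with h | ⟨q₀, hq₀⟩
  · simp [h]
  have hq₀Q := (Finset.mem_filter.mp hq₀).1
  have hq₀n := (Finset.mem_filter.mp hq₀).2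
  have hid : ∀ r ∈ F, r = q₀ ∘ ((Tuple.sort r).symm.trans (Tuple.sort q₀)) := by
    intro r hrF
    have hrQ := (Finset.mem_filter.mp hrF).1
    exact eq_comp_sort_perm (hQ r hrQ) (hQ q₀ hq₀Q)
      (by rw [(Finset.mem_filter.mp hrF).2, hq₀n])
  have : F.card ≤ (Finset.univ : Finset (Equiv.Perm (Fin m))).card := by
    refine Finset.card_le_card_of_injOn
      (fun r => (Tuple.sort r).symm.trans (Tuple.sort q₀))
      (fun _ _ => Finset.mem_univ _) ?_
    intro r₁ h₁ r₂ h₂ hg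
    rw [hid r₁ h₁, hid r₂ h₂]
    simp only at hg
    rw [hg]
  simpa [Finset.card_univ, Fintype.card_perm] using this

lemma log_gap {M j k : ℕ} (hj : 1 ≤ j) (hjM : j ≤ M) (hk : 1 ≤ k)
    (hlt : k < j) : ((j:ℝ) - k)/M ≤ Real.log j - Real.log k := by
  have h0j : (0:ℝ) < j := by exact_mod_cast hj
  have h0k : (0:ℝ) < k := by exact_mod_cast hk
  have h0M : (0:ℝ) < M := lt_of_lt_of_le h0j (by exact_mod_cast hjM)
  have h1 : Real.log k - Real.log j ≤ (k:ℝ)/j - 1 := by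
    rw [← Real.log_div (ne_of_gt h0k) (ne_of_gt h0j)]
    exact Real.log_le_sub_one_of_pos (div_pos h0k h0j)
  have h2 : 1 - (k:ℝ)/j ≤ Real.log j - Real.log k := by linarith
  have h3 : ((j:ℝ) - k)/j = 1 - (k:ℝ)/j := by field_simp
  have h4 : ((j:ℝ) - k)/M ≤ ((j:ℝ) - k)/j := by
    apply div_le_div_of_nonneg_left _ h0j (by exact_mod_cast hjM)
    have : (k:ℝ) < j := by exact_mod_cast hlt
    linarith
  linarith

lemma abs_log_gap {M j k : ℕ} (hj : 1 ≤ j) (hjM : j ≤ M) (hk : 1 ≤ k) (hkM : k ≤ M)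
    (hne : j ≠ k) : |(j:ℝ) - k|/M ≤ |Real.log j - Real.log k| := by
  rcases lt_or_gt_of_ne hne with h | h
  · rw [abs_sub_comm ((j:ℝ)) k, abs_sub_comm (Real.log j) (Real.log k)]
    have := log_gap hk hkM hj h
    have hjk : (j:ℝ) < k := by exact_mod_cast h
    rw [abs_of_nonneg (by linarith), abs_of_nonneg (by linarith [this, div_nonneg (by linarith : (0:ℝ) ≤ (k:ℝ)-j) (by positivity : (0:ℝ) ≤ (M:ℝ))])]
    exact this
  · have := log_gap hj hjM hk h
    have hjk : (k:ℝ) < j := by exact_mod_cast h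
    rw [abs_of_nonneg (by linarith), abs_of_nonneg (by linarith [div_nonneg (by linarith : (0:ℝ) ≤ (j:ℝ)-k) (by positivity : (0:ℝ) ≤ (M:ℝ))])]
    exact this

lemma sum_inv_dist_le {M n : ℕ} (hn : 1 ≤ n) (hnM : n ≤ M) :
    ∑ k ∈ (Finset.Icc 1 M).erase n, 1/|(k:ℝ) - n| ≤ 2*(1 + Real.log M) := by
  classical
  have hharm : ∑ d ∈ Finset.Icc 1 M, ((d:ℝ))⁻¹ ≤ 1 + Real.log M := by
    have h1 : ((harmonic M : ℚ) : ℝ) = ∑ d ∈ Finset.Icc 1 M, ((d:ℝ))⁻¹ := by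
      rw [harmonic_eq_sum_Icc]; push_cast; ring
    have := harmonic_le_one_add_log M
    linarith [h1 ▸ this]
  set S := (Finset.Icc 1 M).erase n with hS
  have hsplit := Finset.sum_filter_add_sum_filter_not S (fun k => k < n)
      (fun k => 1/|(k:ℝ) - n|)
  have hbound : ∀ (S' : Finset ℕ) (φ : ℕ → ℕ), (∀ k ∈ S', φ k ∈ Finset.Icc 1 M) →
      (∀ k ∈ S', |(k:ℝ) - n| = (φ k : ℝ)) → (Set.InjOn φ S') →
      ∑ k ∈ S', 1/|(k:ℝ) - n| ≤ 1 + Real.log M := by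
    intro S' φ hmem heq hinj
    have h1 : ∑ k ∈ S', 1/|(k:ℝ) - n| = ∑ d ∈ S'.image φ, ((d:ℝ))⁻¹ := by
      rw [Finset.sum_image (fun a ha b hb => hinj ha hb)]
      exact Finset.sum_congr rfl fun k hk => by rw [heq k hk, one_div]
    rw [h1]
    refine le_trans (Finset.sum_le_sum_of_subset_of_nonneg ?_ ?_) hharm
    · intro d hd
      obtain ⟨k, hk, rfl⟩ := Finset.mem_image.mp hd
      exact hmem k hk
    · intro d _ _; positivity
  have h₁ : ∑ k ∈ S.filter (fun k => k < n), 1/|(k:ℝ) - n| ≤ 1 + Real.log M := by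
    refine hbound _ (fun k => n - k) ?_ ?_ ?_
    · intro k hk
      have hk' := Finset.mem_filter.mp hk
      have hlt : k < n := hk'.2
      have h1 : 1 ≤ k := (Finset.mem_Icc.mp (Finset.mem_of_mem_erase hk'.1)).1
      refine Finset.mem_Icc.mpr ⟨by omega, by omega⟩
    · intro k hk
      have hk' := Finset.mem_filter.mp hk
      have hkn : k < n := hk'.2
      have hc : (k:ℝ) ≤ n := by exact_mod_cast hkn.le
      rw [abs_of_nonpos (by linarith), Nat.cast_sub hkn.le]; ring
    · intro a ha b hb hab
      have ha' : a < n := (Finset.mem_filter.mp ha).2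
      have hb' : b < n := (Finset.mem_filter.mp hb).2
      have hab' : n - a = n - b := hab
      omega
  have h₂ : ∑ k ∈ S.filter (fun k => ¬ k < n), 1/|(k:ℝ) - n| ≤ 1 + Real.log M := by
    refine hbound _ (fun k => k - n) ?_ ?_ ?_
    · intro k hk
      have hk' := Finset.mem_filter.mp hk
      have hne : k ≠ n := Finset.ne_of_mem_erase hk'.1
      have hkM : k ≤ M := (Finset.mem_Icc.mp (Finset.mem_of_mem_erase hk'.1)).2
      have hge : ¬ k < n := hk'.2
      refine Finset.mem_Icc.mpr ⟨by omega, by omega⟩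
    · intro k hk
      have hk' := Finset.mem_filter.mp hk
      have hne : k ≠ n := Finset.ne_of_mem_erase hk'.1
      have hge : ¬ k < n := hk'.2
      have hnk : n < k := by omega
      have hc : (n:ℝ) ≤ k := by exact_mod_cast hnk.le
      rw [abs_of_nonneg (by linarith), Nat.cast_sub hnk.le]
    · intro a ha b hb hab
      have ha' : ¬ a < n := (Finset.mem_filter.mp ha).2
      have hb' : ¬ b < n := (Finset.mem_filter.mp hb).2
      have hane : a ≠ n := Finset.ne_of_mem_erase (Finset.mem_filter.mp ha).1
      have hbne : b ≠ n := Finset.ne_of_mem_erase (Finset.mem_filter.mp hb).1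
      have hab' : a - n = b - n := hab
      omega
  linarith [hsplit]

lemma abs_integral_exp_le {T d : ℝ} (hd : d ≠ 0) :
    ‖∫ t in T..(2*T), Complex.exp ((Complex.I * (d:ℂ)) * (t:ℂ))‖ ≤ 2/|d| := by
  have hc : Complex.I * (d:ℂ) ≠ 0 :=
    mul_ne_zero Complex.I_ne_zero (by exact_mod_cast Complex.ofReal_ne_zero.mpr hd)
  rw [integral_exp_mul_complex hc, norm_div]
  have habs : ∀ s : ℝ, ‖Complex.exp (Complex.I * (d:ℂ) * (s:ℂ))‖ = 1 := by
    intro s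
    rw [Complex.norm_exp]
    have : (Complex.I * (d:ℂ) * (s:ℂ)).re = 0 := by simp
    rw [this, Real.exp_zero]
  have hnum : ‖Complex.exp (Complex.I * (d:ℂ) * ((2*T:ℝ):ℂ)) -
      Complex.exp (Complex.I * (d:ℂ) * ((T:ℝ):ℂ))‖ ≤ 2 := by
    refine le_trans (norm_sub_le _ _) ?_
    rw [habs, habs]; norm_num
  have hden : ‖Complex.I * (d:ℂ)‖ = |d| := by
    rw [norm_mul, Complex.norm_I, Complex.norm_real, Real.norm_eq_abs, one_mul]
  rw [hden]
  have hd0 : 0 < |d| := abs_pos.mpr hd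
  gcongr


open MeasureTheory

set_option maxHeartbeats 1000000 in
/-- Soundararajan's moment bound: for `T` large, `2 ≤ x ≤ T` and `m` with
`x^m ≤ T/log T`, `(1/T)∫_T^{2T} |∑_{p ≤ x} a(p) p^{-1/2-it}|^{2m} dt
≪ m! (∑_{p ≤ x} |a(p)|²/p)^m` with an absolute implied constant. -/
theorem prime_dirichlet_polynomial_moments :
    ∃ C T₀ : ℝ, 0 < C ∧ ∀ T x : ℝ, T₀ ≤ T → 2 ≤ x → x ≤ T → ∀ m : ℕ, 1 ≤ m →
      x ^ m ≤ T / Real.log T → ∀ a : ℕ → ℂ,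
      (1 / T) * (∫ t in T..(2 * T),
          ‖∑ p ∈ Finset.filter Nat.Prime (Finset.range (⌊x⌋₊ + 1)),
            a p * (p : ℂ) ^ (-(1 / 2 + Complex.I * (t : ℂ)))‖ ^ (2 * m))
        ≤ C * (Nat.factorial m : ℝ) *
            (∑ p ∈ Finset.filter Nat.Prime (Finset.range (⌊x⌋₊ + 1)),
              ‖a p‖ ^ 2 / p) ^ m := by
  classical
  refine ⟨9, 3, by norm_num, ?_⟩
  intro T x hT hx hxT m hm hxm a
  -- basic facts
  have hT0 : (0:ℝ) < T := by linarith
  have hlogT : 1 ≤ Real.log T := by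
    rw [Real.le_log_iff_exp_le hT0]
    have := Real.exp_one_lt_d9
    linarith
  have hlogT0 : (0:ℝ) < Real.log T := by linarith
  set P := Finset.filter Nat.Prime (Finset.range (⌊x⌋₊ + 1)) with hPdef
  set S := ∑ p ∈ P, ‖a p‖ ^ 2 / (p:ℝ) with hSdef
  set M := ⌊x ^ m⌋₊ with hMdef
  have hx1 : (1:ℝ) ≤ x := by linarith
  have hxm1 : (1:ℝ) ≤ x ^ m := one_le_pow₀ hx1
  have hM1 : 1 ≤ M := Nat.le_floor (by exact_mod_cast hxm1)
  have hMle : (M:ℝ) ≤ T / Real.log T := le_trans (Nat.floor_le (by positivity)) hxm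
  have hMleT : (M:ℝ) ≤ T := le_trans hMle (div_le_self hT0.le hlogT)
  have hlogM : Real.log M ≤ Real.log T :=
    Real.log_le_log (by exact_mod_cast hM1) hMleT
  have hlogM0 : 0 ≤ Real.log M := Real.log_nonneg (by exact_mod_cast hM1)
  -- tuple setup
  set Q : Finset (Fin m → ℕ) := Fintype.piFinset (fun _ => P) with hQdef
  set nv : (Fin m → ℕ) → ℕ := fun q => ∏ i, q i with hnvdef
  set A : (Fin m → ℕ) → ℂ := fun q => ∏ i, a (q i) with hAdef
  set L : (Fin m → ℕ) → ℝ := fun q => Real.log (nv q) with hLdef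
  set B : (Fin m → ℕ) → ℝ := fun q => ‖A q‖ * Real.exp (-(L q)/2) with hBdef
  have hQprime : ∀ q ∈ Q, ∀ i, (q i).Prime := by
    intro q hq i
    have := (Fintype.mem_piFinset.mp hq) i
    exact (Finset.mem_filter.mp this).2
  have hQle : ∀ q ∈ Q, ∀ i, ((q i : ℝ)) ≤ x := by
    intro q hq i
    have := (Fintype.mem_piFinset.mp hq) i
    have h1 : q i < ⌊x⌋₊ + 1 := Finset.mem_range.mp (Finset.mem_filter.mp this).1
    have h2 : (q i : ℝ) ≤ (⌊x⌋₊ : ℝ) := by exact_mod_cast Nat.lt_succ_iff.mp h1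
    exact le_trans h2 (Nat.floor_le (by positivity))
  have hnv1 : ∀ q ∈ Q, 1 ≤ nv q := by
    intro q hq
    exact Finset.one_le_prod' (fun i _ => (hQprime q hq i).one_lt.le)
  have hnvM : ∀ q ∈ Q, nv q ≤ M := by
    intro q hq
    refine Nat.le_floor ?_
    have : ((nv q : ℕ) : ℝ) = ∏ i, ((q i : ℝ)) := by simp only [hnvdef]; push_cast; rfl
    rw [this]
    calc ∏ i, ((q i : ℝ)) ≤ ∏ _i : Fin m, x :=
          Finset.prod_le_prod (fun i _ => by positivity) (fun i _ => hQle q hq i)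
      _ = x ^ m := by rw [Finset.prod_const, Finset.card_univ, Fintype.card_fin]
  -- pointwise expansion
  have hDpow : ∀ t : ℝ, (∑ p ∈ P, a p * (p:ℂ) ^ (-(1 / 2 + Complex.I * (t:ℂ)))) ^ m
      = ∑ q ∈ Q, A q * Complex.exp ((-(1 / 2 + Complex.I * (t:ℂ))) * ((L q : ℝ):ℂ)) := by
    intro t
    set z : ℂ := -(1 / 2 + Complex.I * (t:ℂ)) with hzdef
    have h1 : (∑ p ∈ P, a p * (p:ℂ) ^ z) ^ m = ∏ _i : Fin m, (∑ p ∈ P, a p * (p:ℂ) ^ z) := by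
      rw [Finset.prod_const, Finset.card_univ, Fintype.card_fin]
    rw [h1, Finset.prod_univ_sum]
    refine Finset.sum_congr rfl fun q hq => ?_
    rw [Finset.prod_mul_distrib]
    congr 1
    have h2 : ∏ i, ((q i : ℕ) : ℂ) ^ z = ((nv q : ℕ) : ℂ) ^ z := by
      rw [hnvdef]; exact (prod_natCast_cpow _ _ _).symm
    rw [h2]
    have hnv0 : ((nv q : ℕ) : ℂ) ≠ 0 := by
      have := hnv1 q hq
      exact Nat.cast_ne_zero.mpr (by omega)
    rw [Complex.cpow_def_of_ne_zero hnv0, ← Complex.natCast_log, mul_comm]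
  -- coefficient and integrand
  set c : (Fin m → ℕ) → (Fin m → ℕ) → ℂ := fun q r =>
    A q * (starRingEnd ℂ) (A r) * Complex.exp (((-(L q + L r)/2 : ℝ) : ℂ)) with hcdef
  set E : ℝ → ℂ := fun t => ∑ q ∈ Q, ∑ r ∈ Q,
    c q r * Complex.exp ((Complex.I * ((L r - L q : ℝ):ℂ)) * (t:ℂ)) with hEdef
  have hpt : ∀ t : ℝ,
      ‖∑ p ∈ P, a p * (p:ℂ) ^ (-(1 / 2 + Complex.I * (t:ℂ)))‖ ^ (2 * m)
        = (E t).re := by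
    intro t
    have h0 : ∀ w : ℂ, ‖w‖ ^ (2*m) = (w^m * (starRingEnd ℂ) (w^m)).re := by
      intro w
      rw [mul_comm 2 m, pow_mul, ← norm_pow, Complex.sq_norm, Complex.mul_conj,
        Complex.ofReal_re]
    rw [h0, hDpow t, map_sum, Finset.sum_mul_sum]
    rw [hEdef]
    refine congrArg Complex.re (Finset.sum_congr rfl fun q hq => Finset.sum_congr rfl
      fun r hr => ?_)
    set z : ℂ := -(1 / 2 + Complex.I * (t:ℂ)) with hzdef
    rw [map_mul, ← Complex.exp_conj]
    have key : Complex.exp (z * ((L q : ℝ):ℂ)) * Complex.exp ((starRingEnd ℂ) (z * ((L r : ℝ):ℂ)))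
        = Complex.exp (((-(L q + L r)/2 : ℝ):ℂ)) * Complex.exp ((Complex.I * ((L r - L q : ℝ):ℂ)) * (t:ℂ)) := by
      rw [← Complex.exp_add, ← Complex.exp_add]
      have hconj : (starRingEnd ℂ) (z * ((L r : ℝ):ℂ)) = -(1/2 - Complex.I * (t:ℂ)) * ((L r : ℝ):ℂ) := by
        rw [hzdef]
        simp only [map_mul, map_neg, map_add, map_div₀, map_one, map_ofNat, Complex.conj_I,
          Complex.conj_ofReal]
        ring
      rw [hconj, hzdef]
      push_cast
      ring
    calc A q * Complex.exp (z * ((L q : ℝ):ℂ)) * ((starRingEnd ℂ) (A r) *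
            Complex.exp ((starRingEnd ℂ) (z * ((L r : ℝ):ℂ))))
        = (A q * (starRingEnd ℂ) (A r)) * (Complex.exp (z * ((L q : ℝ):ℂ)) *
            Complex.exp ((starRingEnd ℂ) (z * ((L r : ℝ):ℂ)))) := by ring
      _ = c q r * Complex.exp ((Complex.I * ((L r - L q : ℝ):ℂ)) * (t:ℂ)) := by
          rw [key, hcdef]; ring
  -- continuity and integral exchange
  have hcont : ∀ (q r : Fin m → ℕ), Continuous (fun t : ℝ =>
      c q r * Complex.exp ((Complex.I * ((L r - L q : ℝ):ℂ)) * (t:ℂ))) := by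
    intro q r
    exact continuous_const.mul (Complex.continuous_exp.comp
      (continuous_const.mul Complex.continuous_ofReal))
  have hEcont : Continuous E := by
    apply continuous_finset_sum; intro q _
    exact continuous_finset_sum _ (fun r _ => hcont q r)
  have hint : (∫ t in T..(2*T), ‖∑ p ∈ P,
        a p * (p:ℂ) ^ (-(1 / 2 + Complex.I * (t:ℂ)))‖ ^ (2 * m))
      = (∫ t in T..(2*T), E t).re := by
    have h1 : (∫ t in T..(2*T), Complex.reCLM (E t)) = Complex.reCLM (∫ t in T..(2*T), E t) :=
      Complex.reCLM.intervalIntegral_comp_comm (hEcont.intervalIntegrable _ _)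
    simp only [Complex.reCLM_apply] at h1
    rw [← h1]
    exact intervalIntegral.integral_congr (fun t _ => hpt t)
  have hEint : (∫ t in T..(2*T), E t) = ∑ q ∈ Q, ∑ r ∈ Q, c q r *
      ∫ t in T..(2*T), Complex.exp ((Complex.I * ((L r - L q : ℝ):ℂ)) * (t:ℂ)) := by
    rw [hEdef, intervalIntegral.integral_finset_sum
      (fun q _ => (continuous_finset_sum _ (fun r _ => hcont q r)).intervalIntegrable _ _)]
    refine Finset.sum_congr rfl fun q _ => ?_
    rw [intervalIntegral.integral_finset_sum (fun r _ => (hcont q r).intervalIntegrable _ _)]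
    exact Finset.sum_congr rfl fun r _ => intervalIntegral.integral_const_mul _ _
  -- weight function
  set w : (Fin m → ℕ) → (Fin m → ℕ) → ℝ := fun q r =>
    if nv r = nv q then T else 2/|Real.log (nv r) - Real.log (nv q)| with hwdef
  have hwnonneg : ∀ q r, 0 ≤ w q r := by
    intro q r
    simp only [hwdef]
    by_cases h : nv r = nv q
    · simp [h]; linarith
    · simp only [h, if_false, if_neg h]; positivity
  have hwsymm : ∀ q r, w q r = w r q := by
    intro q r
    simp only [hwdef]
    by_cases h : nv r = nv q
    · simp [h]
    · rw [if_neg h, if_neg (fun hh => h hh.symm), abs_sub_comm]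
  have hIbound : ∀ q ∈ Q, ∀ r ∈ Q,
      ‖∫ t in T..(2*T), Complex.exp ((Complex.I * ((L r - L q : ℝ):ℂ)) * (t:ℂ))‖
        ≤ w q r := by
    intro q hq r hr
    simp only [hwdef]
    by_cases h : nv r = nv q
    · have hL : L r - L q = 0 := by rw [hLdef]; simp [h]
      rw [hL, if_pos h]
      simp only [Complex.ofReal_zero, mul_zero, zero_mul, Complex.exp_zero]
      rw [intervalIntegral.integral_const]
      have : ((2*T - T) : ℝ) • (1:ℂ) = (((T:ℝ)):ℂ) := by
        rw [Complex.real_smul]; push_cast; ring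
      rw [this, Complex.norm_real, Real.norm_eq_abs, abs_of_nonneg hT0.le]
    · rw [if_neg h]
      have hd : L r - L q ≠ 0 := by
        intro hcon
        apply h
        have h1 : Real.log (nv r) = Real.log (nv q) := by
          have := sub_eq_zero.mp hcon
          rw [hLdef] at this; exact this
        have := Real.log_injOn_pos (Set.mem_Ioi.mpr (by exact_mod_cast hnv1 r hr))
          (Set.mem_Ioi.mpr (by exact_mod_cast hnv1 q hq)) h1
        exact_mod_cast this
      refine le_trans (abs_integral_exp_le hd) ?_
      rw [hLdef]
  -- coefficient absolute value
  have habsc : ∀ q r, ‖c q r‖ = B q * B r := by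
    intro q r
    rw [hcdef, hBdef]
    simp only [norm_mul, Complex.norm_conj, Complex.norm_exp, Complex.ofReal_re]
    rw [show (-(L q + L r)/2 : ℝ) = (-(L q)/2) + (-(L r)/2) by ring, Real.exp_add]
    ring
  -- sum over fibers bound
  have hinner : ∀ q ∈ Q, ∑ r ∈ Q, w q r ≤ (m.factorial : ℝ) * (9 * T) := by
    intro q hq
    set n := nv q with hndef
    have hn1 : 1 ≤ n := hnv1 q hq
    have hnM : n ≤ M := hnvM q hq
    set v : ℕ → ℝ := fun k => if k = n then T else 2/|Real.log k - Real.log n| with hvdef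
    have hvnonneg : ∀ k, 0 ≤ v k := by
      intro k
      simp only [hvdef]
      by_cases h : k = n
      · simp [h]; linarith
      · rw [if_neg h]; positivity
    have h1 : ∑ r ∈ Q, w q r = ∑ k ∈ Q.image nv, ((Q.filter (fun r => nv r = k)).card : ℝ) * v k := by
      have : ∀ r ∈ Q, w q r = v (nv r) := fun r _ => rfl
      rw [Finset.sum_congr rfl this, Finset.sum_comp]
      exact Finset.sum_congr rfl fun k _ => by rw [nsmul_eq_mul]
    have hcard : ∀ k, ((Q.filter (fun r => nv r = k)).card : ℝ) ≤ (m.factorial : ℝ) := by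
      intro k
      have := card_fiber_le Q hQprime k
      have heq : (Q.filter (fun r => nv r = k)) = (Q.filter (fun r => ∏ i, r i = k)) := by
        simp only [hnvdef]
      rw [heq]
      exact_mod_cast this
    have h2 : ∑ k ∈ Q.image nv, ((Q.filter (fun r => nv r = k)).card : ℝ) * v k
        ≤ (m.factorial : ℝ) * ∑ k ∈ Finset.Icc 1 M, v k := by
      rw [Finset.mul_sum]
      refine le_trans (Finset.sum_le_sum (fun k _ => mul_le_mul_of_nonneg_right (hcard k)
        (hvnonneg k))) ?_
      refine Finset.sum_le_sum_of_subset_of_nonneg ?_ (fun k _ _ => by positivity)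
      intro k hk
      obtain ⟨r, hr, rfl⟩ := Finset.mem_image.mp hk
      exact Finset.mem_Icc.mpr ⟨hnv1 r hr, hnvM r hr⟩
    have hnIcc : n ∈ Finset.Icc 1 M := Finset.mem_Icc.mpr ⟨hn1, hnM⟩
    have h3 : ∑ k ∈ Finset.Icc 1 M, v k = T + ∑ k ∈ (Finset.Icc 1 M).erase n, v k := by
      rw [← Finset.add_sum_erase _ v hnIcc]
      congr 1
      simp only [hvdef, if_pos rfl]
    have h4 : ∑ k ∈ (Finset.Icc 1 M).erase n, v k ≤ 2*M * ∑ k ∈ (Finset.Icc 1 M).erase n,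
        1/|(k:ℝ) - n| := by
      rw [Finset.mul_sum]
      refine Finset.sum_le_sum fun k hk => ?_
      have hkn : k ≠ n := Finset.ne_of_mem_erase hk
      have hk1 : 1 ≤ k := (Finset.mem_Icc.mp (Finset.mem_of_mem_erase hk)).1
      have hkM : k ≤ M := (Finset.mem_Icc.mp (Finset.mem_of_mem_erase hk)).2
      simp only [hvdef]
      rw [if_neg hkn]
      have hgap := abs_log_gap hk1 hkM hn1 hnM hkn
      have hpos : (0:ℝ) < |(k:ℝ) - n|/M := by
        apply div_pos _ (by exact_mod_cast lt_of_lt_of_le hn1 hnM)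
        rw [abs_pos, sub_ne_zero]
        exact_mod_cast hkn
      calc 2/|Real.log k - Real.log n| ≤ 2/(|(k:ℝ) - n|/M) :=
            div_le_div_of_nonneg_left (by norm_num) hpos hgap
        _ = 2*M * (1/|(k:ℝ) - n|) := by
            rw [div_div_eq_mul_div, mul_one_div]
    have h5 : ∑ k ∈ (Finset.Icc 1 M).erase n, (1:ℝ)/|(k:ℝ) - n| ≤ 2*(1 + Real.log M) :=
      sum_inv_dist_le hn1 hnM
    have h6 : (2*(M:ℝ)) * (2*(1 + Real.log M)) ≤ 8 * T := by
      have hM0 : (0:ℝ) ≤ M := by positivity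
      have ha : (M:ℝ) * (1 + Real.log M) ≤ (T/Real.log T) * (2 * Real.log T) := by
        refine mul_le_mul hMle (by linarith) (by linarith) (by positivity)
      have hb : (T/Real.log T) * (2 * Real.log T) = 2*T := by
        field_simp
      nlinarith [ha, hb]
    have hsum_nonneg : (0:ℝ) ≤ ∑ k ∈ (Finset.Icc 1 M).erase n, 1/|(k:ℝ) - n| :=
      Finset.sum_nonneg fun k _ => by positivity
    have hM0' : (0:ℝ) ≤ 2*(M:ℝ) := by positivity
    have h7 : ∑ k ∈ Finset.Icc 1 M, v k ≤ 9 * T := by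
      have := mul_le_mul_of_nonneg_left h5 hM0'
      nlinarith [h3, h4, h6]
    calc ∑ r ∈ Q, w q r ≤ (m.factorial : ℝ) * ∑ k ∈ Finset.Icc 1 M, v k := by
          rw [h1]; exact h2
      _ ≤ (m.factorial : ℝ) * (9 * T) := by
          refine mul_le_mul_of_nonneg_left h7 (by positivity)
  -- sum of B squared
  have hBsum : ∑ q ∈ Q, (B q)^2 = S ^ m := by
    have h1 : ∀ q ∈ Q, (B q)^2 = ∏ i, (‖a (q i)‖^2 / ((q i : ℕ) : ℝ)) := by
      intro q hq
      have hnvpos : (0:ℝ) < ((nv q : ℕ) : ℝ) := by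
        have := hnv1 q hq; exact_mod_cast this
      have hexp : (Real.exp (-(L q)/2))^2 = (((nv q : ℕ):ℝ))⁻¹ := by
        rw [sq, ← Real.exp_add, show -(L q)/2 + -(L q)/2 = -(L q) by ring, Real.exp_neg,
          hLdef, Real.exp_log hnvpos]
      have habsA : ‖A q‖ = ∏ i, ‖a (q i)‖ := by
        simp only [hAdef]; exact norm_prod _ _
      have hcast : ∏ i, ((q i : ℕ):ℝ) = ((nv q:ℕ):ℝ) := by
        simp only [hnvdef]; push_cast; rfl
      simp only [hBdef]
      calc (‖A q‖ * Real.exp (-(L q)/2))^2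
          = (∏ i, ‖a (q i)‖^2) * (((nv q:ℕ):ℝ))⁻¹ := by
            rw [mul_pow, hexp, habsA, ← Finset.prod_pow]
        _ = ∏ i, (‖a (q i)‖^2 / ((q i:ℕ):ℝ)) := by
            rw [Finset.prod_div_distrib, hcast, div_eq_mul_inv]
    have hps := Finset.prod_univ_sum (fun _ : Fin m => P)
      (fun (_ : Fin m) (p : ℕ) => ‖a p‖^2 / (p:ℝ))
    rw [Finset.sum_congr rfl h1, hQdef, ← hps, hSdef,
      Finset.prod_const, Finset.card_univ, Fintype.card_fin]
  -- assembling
  have habs_le : (∫ t in T..(2*T), E t).re ≤ (m.factorial : ℝ) * (9*T) * S ^ m := by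
    have step1 : ‖∫ t in T..(2*T), E t‖ ≤ ∑ q ∈ Q, ∑ r ∈ Q, B q * B r * w q r := by
      rw [hEint]
      refine le_trans (norm_sum_le _ _) (Finset.sum_le_sum fun q hq => ?_)
      refine le_trans (norm_sum_le _ _) (Finset.sum_le_sum fun r hr => ?_)
      rw [norm_mul, habsc]
      exact mul_le_mul_of_nonneg_left (hIbound q hq r hr) (by positivity)
    have step2 : ∑ q ∈ Q, ∑ r ∈ Q, B q * B r * w q r ≤ ∑ q ∈ Q, ∑ r ∈ Q, (B q)^2 * w q r := by
      have h1 : ∑ q ∈ Q, ∑ r ∈ Q, B q * B r * w q r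
          ≤ ∑ q ∈ Q, ∑ r ∈ Q, ((B q)^2 * w q r / 2 + (B r)^2 * w q r / 2) := by
        refine Finset.sum_le_sum fun q _ => Finset.sum_le_sum fun r _ => ?_
        have hB2 : B q * B r ≤ ((B q)^2 + (B r)^2)/2 := by nlinarith [sq_nonneg (B q - B r)]
        calc B q * B r * w q r ≤ (((B q)^2 + (B r)^2)/2) * w q r :=
              mul_le_mul_of_nonneg_right hB2 (hwnonneg q r)
          _ = (B q)^2 * w q r / 2 + (B r)^2 * w q r / 2 := by ring
      have h2 : ∑ q ∈ Q, ∑ r ∈ Q, ((B q)^2 * w q r / 2 + (B r)^2 * w q r / 2)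
          = ∑ q ∈ Q, ∑ r ∈ Q, (B q)^2 * w q r := by
        rw [Finset.sum_congr rfl (fun q _ => Finset.sum_add_distrib), Finset.sum_add_distrib]
        have h3 : ∑ q ∈ Q, ∑ r ∈ Q, (B r)^2 * w q r / 2
            = ∑ q ∈ Q, ∑ r ∈ Q, (B q)^2 * w q r / 2 := by
          rw [Finset.sum_comm]
          exact Finset.sum_congr rfl fun q _ => Finset.sum_congr rfl fun r _ => by
            rw [hwsymm]
        rw [h3, ← Finset.sum_add_distrib]
        refine Finset.sum_congr rfl fun q _ => ?_
        rw [← Finset.sum_add_distrib]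
        exact Finset.sum_congr rfl fun r _ => by ring
      exact le_of_le_of_eq h1 h2
    have step3 : ∑ q ∈ Q, ∑ r ∈ Q, (B q)^2 * w q r ≤ (m.factorial : ℝ) * (9*T) * S ^ m := by
      calc ∑ q ∈ Q, ∑ r ∈ Q, (B q)^2 * w q r = ∑ q ∈ Q, (B q)^2 * ∑ r ∈ Q, w q r :=
            Finset.sum_congr rfl fun q _ => (Finset.mul_sum _ _ _).symm
        _ ≤ ∑ q ∈ Q, (B q)^2 * ((m.factorial : ℝ) * (9*T)) :=
            Finset.sum_le_sum fun q hq => mul_le_mul_of_nonneg_left (hinner q hq) (sq_nonneg _)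
        _ = (m.factorial : ℝ) * (9*T) * ∑ q ∈ Q, (B q)^2 := by rw [← Finset.sum_mul]; ring
        _ = (m.factorial : ℝ) * (9*T) * S ^ m := by rw [hBsum]
    exact le_trans (le_trans (Complex.re_le_norm _) step1) (le_trans step2 step3)
  rw [hint]
  calc (1/T) * (∫ t in T..(2*T), E t).re
      ≤ (1/T) * ((m.factorial : ℝ) * (9*T) * S ^ m) :=
        mul_le_mul_of_nonneg_left habs_le (by positivity)
    _ = 9 * (m.factorial : ℝ) * S ^ m := by field_simp
end

section
/- Let a_j(n) (1 ≤ j ≤ R) be complex coefficients supported on finite sets S_j of positive integers that are pairwise coprime (every element of S_i is coprime to every element of S_j for i ≠ j), and suppose every product n₁⋯n_R with n_j ∈ S_j is at most N where N = o(T). Then (1/T) ∫_T^{2T} ∏_{j=1}^R |∑_{n ∈ S_j} a_j(n) n^{-it}|² dt = (1 + O(N/T))^{1−R} ∏_{j=1}^R ((1/T) ∫_T^{2T} |∑_{n ∈ S_j} a_j(n) n^{-it}|² dt). -/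
open MeasureTheory intervalIntegral Complex Finset

noncomputable section CDPSproof



def eI (l α β : ℝ) : ℂ := ∫ t in α..β, Complex.exp ((Complex.I * l) * t)

lemma eI_zero (α β : ℝ) : eI 0 α β = (β : ℂ) - α := by
  simp [eI, intervalIntegral.integral_const, sub_smul]

lemma Il_ne {l : ℝ} (hl : l ≠ 0) : (Complex.I * l) ≠ 0 :=
  mul_ne_zero Complex.I_ne_zero (by exact_mod_cast hl)

lemma eI_ne {l : ℝ} (hl : l ≠ 0) (α β : ℝ) :
    eI l α β = (Complex.exp ((Complex.I*l)*β) - Complex.exp ((Complex.I*l)*α)) / (Complex.I*l) :=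
  integral_exp_mul_complex (Il_ne hl)

lemma abs_exp_Il (l x : ℝ) : ‖Complex.exp ((Complex.I*l)*x)‖ = 1 := by
  rw [show (Complex.I*l)*x = ((l*x : ℝ):ℂ) * Complex.I by push_cast; ring]
  exact Complex.norm_exp_ofReal_mul_I _

lemma abs_Il {l : ℝ} : ‖Complex.I * l‖ = |l| := by simp [map_mul]

lemma abs_sub_exp_le (l : ℝ) (x y : ℝ) :
    ‖Complex.exp ((Complex.I*l)*x) - Complex.exp ((Complex.I*l)*y)‖ ≤ 2 := by
  calc ‖_‖ ≤ ‖Complex.exp ((Complex.I*l)*x)‖ +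
      ‖Complex.exp ((Complex.I*l)*y)‖ := norm_sub_le _ _
  _ ≤ 2 := by rw [abs_exp_Il, abs_exp_Il]; norm_num

lemma abs_eI_le {l : ℝ} (hl : l ≠ 0) (α β : ℝ) : ‖eI l α β‖ ≤ 2 / |l| := by
  rw [eI_ne hl, norm_div, abs_Il]
  have h1 := abs_sub_exp_le l β α
  gcongr

lemma eI_cont_sub (l c1 c2 : ℝ) : Continuous fun u : ℝ => eI l (c1 - u) (c2 - u) := by
  by_cases hl : l = 0
  · subst hl; simp only [eI_zero]; fun_prop
  · simp only [eI_ne hl]; fun_prop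

lemma eI_cont_add (l c1 c2 : ℝ) : Continuous fun u : ℝ => eI l (c1 + u) (c2 + u) := by
  by_cases hl : l = 0
  · subst hl; simp only [eI_zero]; fun_prop
  · simp only [eI_ne hl]; fun_prop

lemma abs_int_exp_sub {l : ℝ} (hl : l ≠ 0) (X H : ℝ) :
    ‖∫ u in (0:ℝ)..H, Complex.exp ((Complex.I*l)*((X:ℂ) - u))‖ ≤ 2/|l| := by
  have key : ∀ u : ℝ, Complex.exp ((Complex.I*l)*((X:ℂ) - u))
      = Complex.exp ((Complex.I*l)*X) * Complex.exp ((Complex.I*((-l:ℝ):ℂ))*u) := by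
    intro u; rw [← Complex.exp_add]; push_cast; ring_nf
  simp only [key]
  rw [intervalIntegral.integral_const_mul, norm_mul, abs_exp_Il,
    integral_exp_mul_complex (Il_ne (neg_ne_zero.mpr hl)), one_mul, norm_div, abs_Il]
  have h1 := abs_sub_exp_le (-l) H 0
  rw [abs_neg]
  gcongr

lemma abs_int_exp_add {l : ℝ} (hl : l ≠ 0) (X H : ℝ) :
    ‖∫ u in (0:ℝ)..H, Complex.exp ((Complex.I*l)*((X:ℂ) + u))‖ ≤ 2/|l| := by
  have key : ∀ u : ℝ, Complex.exp ((Complex.I*l)*((X:ℂ) + u))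
      = Complex.exp ((Complex.I*l)*X) * Complex.exp ((Complex.I*l)*u) := by
    intro u; rw [← Complex.exp_add]; push_cast; ring_nf
  simp only [key]
  rw [intervalIntegral.integral_const_mul, norm_mul, abs_exp_Il,
    integral_exp_mul_complex (Il_ne hl), one_mul, norm_div, abs_Il]
  have h1 := abs_sub_exp_le l H 0
  gcongr

lemma two_div_add_two_div_abs (l : ℝ) (hl : l ≠ 0) : (2/|l| + 2/|l|)/|l| = 4/l^2 := by
  rw [← add_div, div_div, ← _root_.sq_abs l]
  norm_num [sq]

lemma abs_int_eI_sub {l : ℝ} (hl : l ≠ 0) (c1 c2 H : ℝ) :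
    ‖∫ u in (0:ℝ)..H, eI l (c1-u) (c2-u)‖ ≤ 4/l^2 := by
  simp only [eI_ne hl, Complex.ofReal_sub]
  rw [intervalIntegral.integral_div, intervalIntegral.integral_sub
    ((by fun_prop : Continuous fun u:ℝ => Complex.exp ((Complex.I*l)*((c2:ℂ) - u))).intervalIntegrable _ _)
    ((by fun_prop : Continuous fun u:ℝ => Complex.exp ((Complex.I*l)*((c1:ℂ) - u))).intervalIntegrable _ _),
    norm_div, abs_Il]
  have h2 := abs_int_exp_sub hl c2 H
  have h1 := abs_int_exp_sub hl c1 H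
  have hnum : ‖(∫ u in (0:ℝ)..H, Complex.exp ((Complex.I*l)*((c2:ℂ)-u)))
      - ∫ u in (0:ℝ)..H, Complex.exp ((Complex.I*l)*((c1:ℂ)-u))‖ ≤ 2/|l| + 2/|l| :=
    (norm_sub_le _ _).trans (add_le_add h2 h1)
  have hla : 0 < |l| := abs_pos.mpr hl
  calc ‖_‖ / |l| ≤ (2/|l| + 2/|l|)/|l| := by gcongr
  _ = 4/l^2 := two_div_add_two_div_abs l hl

lemma abs_int_eI_add {l : ℝ} (hl : l ≠ 0) (c1 c2 H : ℝ) :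
    ‖∫ u in (0:ℝ)..H, eI l (c1+u) (c2+u)‖ ≤ 4/l^2 := by
  simp only [eI_ne hl, Complex.ofReal_add]
  rw [intervalIntegral.integral_div, intervalIntegral.integral_sub
    ((by fun_prop : Continuous fun u:ℝ => Complex.exp ((Complex.I*l)*((c2:ℂ) + u))).intervalIntegrable _ _)
    ((by fun_prop : Continuous fun u:ℝ => Complex.exp ((Complex.I*l)*((c1:ℂ) + u))).intervalIntegrable _ _),
    norm_div, abs_Il]
  have h2 := abs_int_exp_add hl c2 H
  have h1 := abs_int_exp_add hl c1 H
  have hnum : ‖(∫ u in (0:ℝ)..H, Complex.exp ((Complex.I*l)*((c2:ℂ)+u)))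
      - ∫ u in (0:ℝ)..H, Complex.exp ((Complex.I*l)*((c1:ℂ)+u))‖ ≤ 2/|l| + 2/|l| :=
    (norm_sub_le _ _).trans (add_le_add h2 h1)
  have hla : 0 < |l| := abs_pos.mpr hl
  calc ‖_‖ / |l| ≤ (2/|l| + 2/|l|)/|l| := by gcongr
  _ = 4/l^2 := two_div_add_two_div_abs l hl

lemma int_eI_zero_sub (c1 c2 H : ℝ) :
    (∫ u in (0:ℝ)..H, eI 0 (c1-u) (c2-u)) = (H:ℂ) * ((c2:ℂ) - c1) := by
  simp only [eI_zero]
  have key : (fun u : ℝ => ((c2 - u : ℝ):ℂ) - ((c1 - u:ℝ):ℂ)) = fun _ : ℝ => ((c2:ℂ) - c1) := by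
    funext u; push_cast; ring
  rw [key, intervalIntegral.integral_const]
  simp [Complex.real_smul]

lemma int_eI_zero_add (c1 c2 H : ℝ) :
    (∫ u in (0:ℝ)..H, eI 0 (c1+u) (c2+u)) = (H:ℂ) * ((c2:ℂ) - c1) := by
  simp only [eI_zero]
  have key : (fun u : ℝ => ((c2 + u : ℝ):ℂ) - ((c1 + u:ℝ):ℂ)) = fun _ : ℝ => ((c2:ℂ) - c1) := by
    funext u; push_cast; ring
  rw [key, intervalIntegral.integral_const]
  simp [Complex.real_smul]





lemma intervalIntegral_re {f : ℝ → ℂ} {a b : ℝ} (hf : IntervalIntegrable f volume a b) :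
    (∫ t in a..b, (f t).re) = (∫ t in a..b, f t).re := by
  simp only [intervalIntegral, Complex.sub_re, ← RCLike.re_to_complex]
  rw [integral_re hf.1, integral_re hf.2]
  simp [map_sub]

lemma cpow_eq_exp (n : ℕ) (hn : 0 < n) (t : ℝ) :
    (n:ℂ) ^ (-(Complex.I * (t:ℂ))) = Complex.exp ((Real.log n : ℂ) * (-(Complex.I * t))) := by
  rw [Complex.cpow_def_of_ne_zero (by exact_mod_cast hn.ne' : (n:ℂ) ≠ 0)]
  rw [show Complex.log (n:ℂ) = (Real.log n : ℂ) by
    rw [← Complex.ofReal_natCast, Complex.ofReal_log (Nat.cast_nonneg n)]]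

lemma pair_eq (m n : ℕ) (hm : 0 < m) (hn : 0 < n) (t : ℝ) :
    (m:ℂ) ^ (-(Complex.I * (t:ℂ))) * (starRingEnd ℂ) ((n:ℂ) ^ (-(Complex.I * (t:ℂ))))
      = Complex.exp ((Complex.I * ((Real.log n - Real.log m : ℝ):ℂ)) * t) := by
  rw [cpow_eq_exp m hm, cpow_eq_exp n hn, ← Complex.exp_conj, ← Complex.exp_add]
  congr 1
  simp only [map_mul, map_neg, Complex.conj_ofReal, Complex.conj_I]
  push_cast
  ring

lemma expand (S : Finset ℕ) (a : ℕ → ℂ) (hpos : ∀ n ∈ S, 0 < n) (α β : ℝ) :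
    (∫ t in α..β, ‖∑ n ∈ S, a n * (n:ℂ) ^ (-(Complex.I * (t:ℂ)))‖^2)
      = (∑ m ∈ S, ∑ n ∈ S,
          (a m * (starRingEnd ℂ) (a n)) * eI (Real.log n - Real.log m) α β).re := by
  have hA : ∀ t : ℝ, (‖∑ n ∈ S, a n * (n:ℂ) ^ (-(Complex.I * (t:ℂ)))‖^2 : ℝ)
      = ((∑ m ∈ S, ∑ n ∈ S, (a m * (starRingEnd ℂ) (a n)) *
          Complex.exp ((Complex.I * ((Real.log n - Real.log m : ℝ):ℂ)) * t)).re) := by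
    intro t
    set z := ∑ n ∈ S, a n * (n:ℂ) ^ (-(Complex.I * (t:ℂ))) with hz
    have h1 : ‖z‖^2 = (z * (starRingEnd ℂ) z).re := by
      rw [Complex.mul_conj, Complex.sq_norm]; simp
    rw [h1, hz, map_sum, Finset.sum_mul_sum]
    congr 1
    refine Finset.sum_congr rfl fun m hm => Finset.sum_congr rfl fun n hn => ?_
    rw [map_mul]
    rw [show a m * (m:ℂ) ^ (-(Complex.I * (t:ℂ))) * ((starRingEnd ℂ) (a n) *
        (starRingEnd ℂ) ((n:ℂ) ^ (-(Complex.I * (t:ℂ)))))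
      = (a m * (starRingEnd ℂ) (a n)) * ((m:ℂ) ^ (-(Complex.I * (t:ℂ))) *
        (starRingEnd ℂ) ((n:ℂ) ^ (-(Complex.I * (t:ℂ))))) by ring]
    rw [pair_eq m n (hpos m hm) (hpos n hn)]
  simp only [hA]
  have hcont : ∀ m n : ℕ, Continuous fun t : ℝ => (a m * (starRingEnd ℂ) (a n)) *
      Complex.exp ((Complex.I * ((Real.log n - Real.log m : ℝ):ℂ)) * t) := by
    intro m n; fun_prop
  rw [intervalIntegral_re]
  · congr 1
    rw [intervalIntegral.integral_finset_sum (fun m _ => ?_)]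
    · refine Finset.sum_congr rfl fun m hm => ?_
      rw [intervalIntegral.integral_finset_sum (fun n _ => ((hcont m n).intervalIntegrable _ _))]
      refine Finset.sum_congr rfl fun n hn => ?_
      rw [intervalIntegral.integral_const_mul]
      rfl
    · exact (continuous_finset_sum _ fun n _ => hcont m n).intervalIntegrable _ _
  · exact (continuous_finset_sum _ fun m _ =>
      continuous_finset_sum _ fun n _ => hcont m n).intervalIntegrable _ _




lemma sum_Icc_inv_sq_aux : ∀ K : ℕ, 1 ≤ K → ∑ k ∈ Finset.Icc 1 K, (1:ℝ)/(k:ℝ)^2 ≤ 2 - 1/K := by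
  intro K
  induction K with
  | zero => intro h; omega
  | succ n ih =>
    intro _
    rcases Nat.eq_zero_or_pos n with h | hn
    · subst h; norm_num
    rw [Finset.sum_Icc_succ_top (by omega)]
    have hnn : (0:ℝ) < n := by exact_mod_cast hn
    have hnn1 : (0:ℝ) < (n:ℝ) + 1 := by linarith
    have key : (1:ℝ)/((n+1:ℕ):ℝ)^2 ≤ 1/(n:ℝ) - 1/((n:ℝ)+1) := by
      rw [div_sub_div _ _ (ne_of_gt hnn) (ne_of_gt hnn1)]
      rw [div_le_div_iff₀ (by positivity) (by positivity)]
      push_cast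
      nlinarith
    calc _ ≤ (2 - 1/(n:ℝ)) + (1/(n:ℝ) - 1/((n:ℝ)+1)) := add_le_add (ih hn) key
    _ = 2 - 1/((n+1:ℕ):ℝ) := by push_cast; ring

lemma sum_Icc_inv_sq (K : ℕ) : ∑ k ∈ Finset.Icc 1 K, (1:ℝ)/(k:ℝ)^2 ≤ 2 := by
  rcases Nat.eq_zero_or_pos K with h | h
  · subst h; simp
  refine (sum_Icc_inv_sq_aux K h).trans ?_
  have : (0:ℝ) ≤ 1/(K:ℝ) := by positivity
  linarith

lemma sum_side_gt (A : Finset ℕ) (m : ℕ) (h : ∀ n ∈ A, m < n) :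
    ∑ n ∈ A, (1:ℝ)/((n:ℝ)-(m:ℝ))^2 ≤ 2 := by
  have hcast : ∀ n ∈ A, (1:ℝ)/((n:ℝ)-(m:ℝ))^2 = (1:ℝ)/(((n-m : ℕ)):ℝ)^2 := by
    intro n hn
    rw [Nat.cast_sub (le_of_lt (h n hn))]
  rw [Finset.sum_congr rfl hcast]
  rw [← Finset.sum_image (s := A) (g := fun n => n - m) (f := fun k : ℕ => (1:ℝ)/(k:ℝ)^2)
    (by intro x hx y hy hxy; simp only at hxy; have := h x hx; have := h y hy; omega)]
  refine le_trans (Finset.sum_le_sum_of_subset_of_nonneg ?_ (by intros; positivity)) (sum_Icc_inv_sq ((A.image (fun n => n - m)).sup id))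
  intro k hk
  simp only [Finset.mem_image] at hk
  obtain ⟨n, hn, rfl⟩ := hk
  refine Finset.mem_Icc.mpr ⟨by have := h n hn; omega, ?_⟩
  exact Finset.le_sup (f := id) (Finset.mem_image_of_mem _ hn)

lemma sum_side_lt (A : Finset ℕ) (m : ℕ) (h : ∀ n ∈ A, n < m) :
    ∑ n ∈ A, (1:ℝ)/((n:ℝ)-(m:ℝ))^2 ≤ 2 := by
  have hcast : ∀ n ∈ A, (1:ℝ)/((n:ℝ)-(m:ℝ))^2 = (1:ℝ)/(((m-n : ℕ)):ℝ)^2 := by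
    intro n hn
    rw [Nat.cast_sub (le_of_lt (h n hn))]
    rw [show ((n:ℝ)-(m:ℝ))^2 = ((m:ℝ)-(n:ℝ))^2 by ring]
  rw [Finset.sum_congr rfl hcast]
  rw [← Finset.sum_image (s := A) (g := fun n => m - n) (f := fun k : ℕ => (1:ℝ)/(k:ℝ)^2)
    (by intro x hx y hy hxy; simp only at hxy; have := h x hx; have := h y hy; omega)]
  refine le_trans (Finset.sum_le_sum_of_subset_of_nonneg ?_ (by intros; positivity)) (sum_Icc_inv_sq ((A.image (fun n => m - n)).sup id))
  intro k hk
  simp only [Finset.mem_image] at hk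
  obtain ⟨n, hn, rfl⟩ := hk
  refine Finset.mem_Icc.mpr ⟨by have := h n hn; omega, ?_⟩
  exact Finset.le_sup (f := id) (Finset.mem_image_of_mem _ hn)

lemma sum_erase_inv_sq (S : Finset ℕ) (m : ℕ) :
    ∑ n ∈ S.erase m, (1:ℝ)/((n:ℝ)-(m:ℝ))^2 ≤ 4 := by
  rw [← Finset.sum_filter_add_sum_filter_not (S.erase m) (· < m)]
  have h1 : ∑ n ∈ (S.erase m).filter (· < m), (1:ℝ)/((n:ℝ)-(m:ℝ))^2 ≤ 2 :=
    sum_side_lt _ m (fun n hn => (Finset.mem_filter.mp hn).2)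
  have h2 : ∑ n ∈ (S.erase m).filter (fun n => ¬ n < m), (1:ℝ)/((n:ℝ)-(m:ℝ))^2 ≤ 2 := by
    refine sum_side_gt _ m (fun n hn => ?_)
    have h3 := Finset.mem_filter.mp hn
    have h4 := Finset.ne_of_mem_erase h3.1
    omega
  linarith

lemma sum_swap_erase (S : Finset ℕ) (f : ℕ → ℕ → ℝ) :
    ∑ m ∈ S, ∑ n ∈ S.erase m, f m n = ∑ m ∈ S, ∑ n ∈ S.erase m, f n m := by
  have key : ∀ g : ℕ → ℕ → ℝ, ∑ m ∈ S, ∑ n ∈ S.erase m, g m n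
      = ∑ m ∈ S, ∑ n ∈ S, if n ≠ m then g m n else 0 := by
    intro g
    refine Finset.sum_congr rfl fun m _ => ?_
    rw [← Finset.filter_ne' S m, Finset.sum_filter]
  rw [key, key]
  rw [Finset.sum_comm]
  refine Finset.sum_congr rfl fun m _ => Finset.sum_congr rfl fun n _ => ?_
  exact if_congr ne_comm rfl rfl





lemma loggap {N : ℝ} {m n : ℕ} (hm : 0 < m) (hnN : (n:ℝ) ≤ N) (hlt : m < n) :
    ((n:ℝ) - m) ≤ N * (Real.log n - Real.log m) := by
  have hn : 0 < n := lt_trans hm hlt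
  have hm' : (0:ℝ) < m := by exact_mod_cast hm
  have hn' : (0:ℝ) < n := by exact_mod_cast hn
  have hmn : (m:ℝ) < n := by exact_mod_cast hlt
  have h1 : Real.log ((m:ℝ)/n) ≤ (m:ℝ)/n - 1 := Real.log_le_sub_one_of_pos (by positivity)
  rw [Real.log_div (ne_of_gt hm') (ne_of_gt hn')] at h1
  have h2 : ((n:ℝ) - m)/n ≤ Real.log n - Real.log m := by
    have e : (m:ℝ)/n - 1 = -(((n:ℝ)-m)/n) := by field_simp; ring
    rw [e] at h1
    linarith
  have hlog : 0 ≤ Real.log n - Real.log m :=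
    le_trans (div_nonneg (by linarith) (le_of_lt hn')) h2
  have h3 : ((n:ℝ) - m)/n * n ≤ (Real.log n - Real.log m) * N :=
    mul_le_mul h2 hnN (le_of_lt hn') hlog
  rw [div_mul_cancel₀ _ (ne_of_gt hn')] at h3
  linarith

lemma log_sq_gap {N : ℝ} {m n : ℕ} (hm : 0 < m) (hn : 0 < n) (hmN : (m:ℝ) ≤ N)
    (hnN : (n:ℝ) ≤ N) (hne : m ≠ n) :
    ((n:ℝ) - m)^2 ≤ N^2 * (Real.log n - Real.log m)^2 := by
  rcases lt_or_gt_of_ne hne with h | h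
  · have h1 := loggap hm hnN h
    have h0 : (0:ℝ) ≤ (n:ℝ) - m := by
      have : (m:ℝ) ≤ n := by exact_mod_cast le_of_lt h
      linarith
    nlinarith
  · have h1 := loggap hn hmN h
    have h0 : (0:ℝ) ≤ (m:ℝ) - n := by
      have : (n:ℝ) ≤ m := by exact_mod_cast le_of_lt h
      linarith
    nlinarith

lemma log_ne {m n : ℕ} (hm : 0 < m) (hn : 0 < n) (hne : m ≠ n) :
    Real.log n - Real.log m ≠ 0 := by
  rcases lt_or_gt_of_ne hne with h | h
  · have := Real.log_lt_log (by exact_mod_cast hm) (by exact_mod_cast h : (m:ℝ) < n)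
    linarith
  · have := Real.log_lt_log (by exact_mod_cast hn) (by exact_mod_cast h : (n:ℝ) < m)
    linarith

lemma offdiag_bound (S : Finset ℕ) (a : ℕ → ℂ) (N : ℝ) (hN : 0 < N)
    (hS : ∀ n ∈ S, 0 < n ∧ (n:ℝ) ≤ N) (F : ℕ → ℕ → ℂ)
    (hF : ∀ m ∈ S, ∀ n ∈ S, m ≠ n →
      ‖F m n‖ ≤ 4/(Real.log n - Real.log m)^2) :
    |(∑ m ∈ S, ∑ n ∈ S.erase m, (a m * (starRingEnd ℂ) (a n)) * F m n).re|
      ≤ 16*N^2*∑ n ∈ S, ‖a n‖^2 := by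
  set w : ℕ → ℝ := fun n => ‖a n‖^2 with hw
  have hw0 : ∀ n, 0 ≤ w n := fun n => sq_nonneg _
  have step1 : |(∑ m ∈ S, ∑ n ∈ S.erase m, (a m * (starRingEnd ℂ) (a n)) * F m n).re|
      ≤ ∑ m ∈ S, ∑ n ∈ S.erase m, ‖(a m * (starRingEnd ℂ) (a n)) * F m n‖ := by
    refine (Complex.abs_re_le_norm _).trans ?_
    refine (norm_sum_le _ _).trans ?_
    exact Finset.sum_le_sum fun m _ => norm_sum_le _ _
  have step2 : ∀ m ∈ S, ∀ n ∈ S.erase m,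
      ‖(a m * (starRingEnd ℂ) (a n)) * F m n‖
        ≤ 2*N^2*(w m * (1/((n:ℝ)-(m:ℝ))^2)) + 2*N^2*(w n * (1/((n:ℝ)-(m:ℝ))^2)) := by
    intro m hm n hn
    have hnS := Finset.mem_of_mem_erase hn
    have hne := Finset.ne_of_mem_erase hn
    obtain ⟨hmpos, hmN⟩ := hS m hm
    obtain ⟨hnpos, hnN⟩ := hS n hnS
    have hne' : m ≠ n := fun h => hne (h ▸ rfl)
    have hgap := log_sq_gap hmpos hnpos hmN hnN hne'
    have hd0 : (0:ℝ) < ((n:ℝ)-(m:ℝ))^2 := by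
      have h5 : (n:ℝ) ≠ (m:ℝ) := by exact_mod_cast (Ne.symm hne')
      have h6 : (n:ℝ) - (m:ℝ) ≠ 0 := sub_ne_zero.mpr h5
      positivity
    have hl2 : (0:ℝ) < (Real.log n - Real.log m)^2 := by
      have := log_ne hmpos hnpos hne'
      positivity
    have hab : ‖(a m * (starRingEnd ℂ) (a n)) * F m n‖
        = ‖a m‖ * ‖a n‖ * ‖F m n‖ := by
      rw [norm_mul, norm_mul, Complex.norm_conj]
    rw [hab]
    have h1 : ‖F m n‖ ≤ 4*N^2/((n:ℝ)-(m:ℝ))^2 := by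
      refine (hF m hm n hnS hne').trans ?_
      rw [div_le_div_iff₀ hl2 hd0]
      nlinarith
    have h2 : ‖a m‖ * ‖a n‖ ≤ (w m + w n)/2 := by
      rw [hw]
      nlinarith [sq_nonneg (‖a m‖ - ‖a n‖),
        norm_nonneg (a m), norm_nonneg (a n)]
    calc ‖a m‖ * ‖a n‖ * ‖F m n‖
        ≤ ((w m + w n)/2) * (4*N^2/((n:ℝ)-(m:ℝ))^2) := by
          apply mul_le_mul h2 h1 (norm_nonneg _)
          positivity
    _ = 2*N^2*(w m * (1/((n:ℝ)-(m:ℝ))^2)) + 2*N^2*(w n * (1/((n:ℝ)-(m:ℝ))^2)) := by ring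
  have inner_bound : ∀ g : ℕ → ℝ, (∀ k, 0 ≤ g k) → ∀ m ∈ S,
      ∑ n ∈ S.erase m, 2*N^2*(g m * (1/((n:ℝ)-(m:ℝ))^2)) ≤ 8*N^2*g m := by
    intro g hg m _
    have e : ∑ n ∈ S.erase m, 2*N^2*(g m * (1/((n:ℝ)-(m:ℝ))^2))
        = 2*N^2*g m * ∑ n ∈ S.erase m, (1:ℝ)/((n:ℝ)-(m:ℝ))^2 := by
      rw [Finset.mul_sum]
      exact Finset.sum_congr rfl fun n _ => by ring
    rw [e]
    have h := sum_erase_inv_sq S m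
    have hc : (0:ℝ) ≤ 2*N^2*g m := by
      have := hg m
      positivity
    nlinarith
  have sumB_eq : ∑ m ∈ S, ∑ n ∈ S.erase m, 2*N^2*(w n * (1/((n:ℝ)-(m:ℝ))^2))
      = ∑ m ∈ S, ∑ n ∈ S.erase m, 2*N^2*(w m * (1/((n:ℝ)-(m:ℝ))^2)) := by
    rw [sum_swap_erase S (fun m n => 2*N^2*(w n * (1/((n:ℝ)-(m:ℝ))^2)))]
    refine Finset.sum_congr rfl fun m _ => Finset.sum_congr rfl fun n _ => ?_
    rw [show ((m:ℝ)-(n:ℝ))^2 = ((n:ℝ)-(m:ℝ))^2 by ring]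
  calc |(∑ m ∈ S, ∑ n ∈ S.erase m, (a m * (starRingEnd ℂ) (a n)) * F m n).re|
      ≤ ∑ m ∈ S, ∑ n ∈ S.erase m, ‖(a m * (starRingEnd ℂ) (a n)) * F m n‖ := step1
  _ ≤ ∑ m ∈ S, ∑ n ∈ S.erase m,
        (2*N^2*(w m * (1/((n:ℝ)-(m:ℝ))^2)) + 2*N^2*(w n * (1/((n:ℝ)-(m:ℝ))^2))) :=
      Finset.sum_le_sum fun m hm => Finset.sum_le_sum fun n hn => step2 m hm n hn
  _ = (∑ m ∈ S, ∑ n ∈ S.erase m, 2*N^2*(w m * (1/((n:ℝ)-(m:ℝ))^2)))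
      + ∑ m ∈ S, ∑ n ∈ S.erase m, 2*N^2*(w n * (1/((n:ℝ)-(m:ℝ))^2)) := by
      rw [← Finset.sum_add_distrib]
      exact Finset.sum_congr rfl fun m _ => Finset.sum_add_distrib
  _ ≤ (∑ m ∈ S, 8*N^2*w m) + ∑ m ∈ S, 8*N^2*w m := by
      rw [sumB_eq]
      exact add_le_add (Finset.sum_le_sum (inner_bound w hw0))
        (Finset.sum_le_sum (inner_bound w hw0))
  _ = 16*N^2*∑ n ∈ S, w n := by
      rw [← Finset.mul_sum]
      ring


theorem mv_main (T N : ℝ) (S : Finset ℕ) (a : ℕ → ℂ) (hT : 0 < T) (hN : 0 < N) (hNT : N ≤ T)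
    (hS : ∀ n ∈ S, 0 < n ∧ (n:ℝ) ≤ N) :
    |(∫ t in T..(2*T), ‖∑ n ∈ S, a n * (n:ℂ) ^ (-(Complex.I * (t:ℂ)))‖^2)
      - T * ∑ n ∈ S, ‖a n‖^2| ≤ 17 * N * ∑ n ∈ S, ‖a n‖^2 := by
  have hpos : ∀ n ∈ S, 0 < n := fun n hn => (hS n hn).1
  set D := ∑ n ∈ S, ‖a n‖^2 with hD
  set A : ℝ → ℂ := fun t => ∑ n ∈ S, a n * (n:ℂ) ^ (-(Complex.I * (t:ℂ))) with hA
  have hAcont : Continuous A := by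
    apply continuous_finset_sum
    intro n hn
    exact continuous_const.mul (Continuous.const_cpow (by fun_prop)
      (Or.inl (by exact_mod_cast (hpos n hn).ne')))
  have hf2cont : Continuous fun t => ‖A t‖^2 :=
    (continuous_norm.comp hAcont).pow 2
  set P : ℝ → ℝ → ℝ := fun α β => ∫ t in α..β, ‖A t‖^2 with hP
  have hPadd : ∀ α β γ : ℝ, P α β + P β γ = P α γ := fun α β γ =>
    integral_add_adjacent_intervals (hf2cont.intervalIntegrable _ _) (hf2cont.intervalIntegrable _ _)
  have hPnonneg : ∀ {α β : ℝ}, α ≤ β → 0 ≤ P α β := fun {α β} h =>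
    intervalIntegral.integral_nonneg h (fun t _ => sq_nonneg _)
  have hPmono : ∀ {α β : ℝ}, α ≤ T → 2*T ≤ β → P T (2*T) ≤ P α β := by
    intro α β h1 h2
    have e1 := hPadd α T (2*T)
    have e2 := hPadd α (2*T) β
    have n1 := hPnonneg h1
    have n2 := hPnonneg h2
    linarith
  have hPmono2 : ∀ {α β : ℝ}, T ≤ α → α ≤ β → β ≤ 2*T → P α β ≤ P T (2*T) := by
    intro α β h1 h2 h3
    have e1 := hPadd T α β
    have e2 := hPadd T β (2*T)
    have n1 := hPnonneg h1
    have n2 := hPnonneg h3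
    linarith
  have hexp : ∀ α β : ℝ, P α β = (∑ m ∈ S, ∑ n ∈ S,
      (a m * (starRingEnd ℂ) (a n)) * eI (Real.log n - Real.log m) α β).re :=
    fun α β => expand S a hpos α β
  have hsplit : ∀ X : ℕ → ℕ → ℂ, ∑ m ∈ S, ∑ n ∈ S, X m n
      = (∑ m ∈ S, X m m) + ∑ m ∈ S, ∑ n ∈ S.erase m, X m n := by
    intro X
    rw [← Finset.sum_add_distrib]
    exact Finset.sum_congr rfl fun m hm => (Finset.add_sum_erase _ _ hm).symm
  -- UPPER BOUND
  have upper : P T (2*T) ≤ T * D + 17 * N * D := by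
    set G : ℝ → ℂ := fun u => ∑ m ∈ S, ∑ n ∈ S,
      (a m * (starRingEnd ℂ) (a n)) * eI (Real.log n - Real.log m) (T - u) (2*T+N - u) with hG
    have hGc : Continuous G := by
      apply continuous_finset_sum; intro m _
      apply continuous_finset_sum; intro n _
      exact continuous_const.mul (eI_cont_sub _ T (2*T+N))
    have hup : ∀ u ∈ Set.Icc (0:ℝ) N, P T (2*T) ≤ (G u).re := by
      intro u hu
      rw [hG]
      rw [← hexp (T - u) (2*T+N - u)]
      exact hPmono (by linarith [hu.1]) (by linarith [hu.2])
    have hNP : N * P T (2*T) ≤ (∫ u in (0:ℝ)..N, G u).re := by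
      have h1 : N * P T (2*T) = ∫ u in (0:ℝ)..N, P T (2*T) := by
        rw [intervalIntegral.integral_const, smul_eq_mul]; ring
      rw [h1, ← intervalIntegral_re (hGc.intervalIntegrable _ _)]
      exact intervalIntegral.integral_mono_on (le_of_lt hN)
        intervalIntegrable_const
        ((Complex.continuous_re.comp hGc).intervalIntegrable _ _) hup
    set F : ℕ → ℕ → ℂ := fun m n =>
      ∫ u in (0:ℝ)..N, eI (Real.log n - Real.log m) (T - u) (2*T+N - u) with hF
    have hGint : (∫ u in (0:ℝ)..N, G u)
        = ∑ m ∈ S, ∑ n ∈ S, (a m * (starRingEnd ℂ) (a n)) * F m n := by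
      simp only [hG]; rw [intervalIntegral.integral_finset_sum
        (f := fun (m : ℕ) (u : ℝ) => ∑ n ∈ S, a m * (starRingEnd ℂ) (a n) * eI (Real.log n - Real.log m) (T - u) (2*T+N - u)) (fun m _ =>
        ((continuous_finset_sum _ fun n _ => continuous_const.mul
          (eI_cont_sub _ T (2*T+N))).intervalIntegrable _ _))]
      refine Finset.sum_congr rfl fun m _ => ?_
      rw [intervalIntegral.integral_finset_sum
        (f := fun (n : ℕ) (u : ℝ) => a m * (starRingEnd ℂ) (a n) * eI (Real.log n - Real.log m) (T - u) (2*T+N - u)) (fun n _ =>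
        ((continuous_const.mul (eI_cont_sub _ T (2*T+N))).intervalIntegrable _ _))]
      exact Finset.sum_congr rfl fun n _ => intervalIntegral.integral_const_mul _ _
    have hdiag : (∑ m ∈ S, (a m * (starRingEnd ℂ) (a m)) * F m m)
        = ((D * (N*(T+N)) : ℝ) : ℂ) := by
      have e1 : ∀ m ∈ S, (a m * (starRingEnd ℂ) (a m)) * F m m
          = ((‖a m‖^2 * (N*(T+N)) : ℝ) : ℂ) := by
        intro m _
        rw [hF]
        simp only [sub_self]
        rw [int_eI_zero_sub T (2*T+N) N, Complex.mul_conj, ← Complex.sq_norm]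
        push_cast
        ring
      rw [Finset.sum_congr rfl e1, ← Complex.ofReal_sum, hD]
      push_cast
      rw [← Finset.sum_mul]
    have hoff : |(∑ m ∈ S, ∑ n ∈ S.erase m, (a m * (starRingEnd ℂ) (a n)) * F m n).re|
        ≤ 16*N^2*D := by
      refine offdiag_bound S a N hN hS F (fun m hm n hn hne => ?_)
      rw [hF]
      exact abs_int_eI_sub (log_ne (hpos m hm) (hpos n hn) hne) T (2*T+N) N
    have key : (∫ u in (0:ℝ)..N, G u).re ≤ D * (N*(T+N)) + 16*N^2*D := by
      rw [hGint, hsplit, Complex.add_re, hdiag, Complex.ofReal_re]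
      have := neg_abs_le ((∑ m ∈ S, ∑ n ∈ S.erase m,
        (a m * (starRingEnd ℂ) (a n)) * F m n).re)
      have h2 := le_abs_self ((∑ m ∈ S, ∑ n ∈ S.erase m,
        (a m * (starRingEnd ℂ) (a n)) * F m n).re)
      linarith
    have final : N * P T (2*T) ≤ N * (T * D + 17 * N * D) := by
      have e : D * (N*(T+N)) + 16*N^2*D = N * (T * D + 17 * N * D) := by ring
      linarith [hNP, key]
    exact le_of_mul_le_mul_left final hN
  -- LOWER BOUND
  have lower : T * D - 17 * N * D ≤ P T (2*T) := by
    set G : ℝ → ℂ := fun u => ∑ m ∈ S, ∑ n ∈ S,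
      (a m * (starRingEnd ℂ) (a n)) * eI (Real.log n - Real.log m) (T + u) (2*T-N + u) with hG
    have hGc : Continuous G := by
      apply continuous_finset_sum; intro m _
      apply continuous_finset_sum; intro n _
      exact continuous_const.mul (eI_cont_add _ T (2*T-N))
    have hdn : ∀ u ∈ Set.Icc (0:ℝ) N, (G u).re ≤ P T (2*T) := by
      intro u hu
      rw [hG, ← hexp (T + u) (2*T-N + u)]
      exact hPmono2 (by linarith [hu.1]) (by linarith) (by linarith [hu.2])
    have hNP : (∫ u in (0:ℝ)..N, G u).re ≤ N * P T (2*T) := by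
      have h1 : N * P T (2*T) = ∫ u in (0:ℝ)..N, P T (2*T) := by
        rw [intervalIntegral.integral_const, smul_eq_mul]; ring
      rw [h1, ← _root_.intervalIntegral_re (hGc.intervalIntegrable _ _)]
      exact intervalIntegral.integral_mono_on (le_of_lt hN)
        ((Complex.continuous_re.comp hGc).intervalIntegrable _ _)
        intervalIntegrable_const hdn
    set F : ℕ → ℕ → ℂ := fun m n =>
      ∫ u in (0:ℝ)..N, eI (Real.log n - Real.log m) (T + u) (2*T-N + u) with hF
    have hGint : (∫ u in (0:ℝ)..N, G u)
        = ∑ m ∈ S, ∑ n ∈ S, (a m * (starRingEnd ℂ) (a n)) * F m n := by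
      simp only [hG]; rw [intervalIntegral.integral_finset_sum
        (f := fun (m : ℕ) (u : ℝ) => ∑ n ∈ S, a m * (starRingEnd ℂ) (a n) * eI (Real.log n - Real.log m) (T + u) (2*T-N + u)) (fun m _ =>
        ((continuous_finset_sum _ fun n _ => continuous_const.mul
          (eI_cont_add _ T (2*T-N))).intervalIntegrable _ _))]
      refine Finset.sum_congr rfl fun m _ => ?_
      rw [intervalIntegral.integral_finset_sum
        (f := fun (n : ℕ) (u : ℝ) => a m * (starRingEnd ℂ) (a n) * eI (Real.log n - Real.log m) (T + u) (2*T-N + u)) (fun n _ =>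
        ((continuous_const.mul (eI_cont_add _ T (2*T-N))).intervalIntegrable _ _))]
      exact Finset.sum_congr rfl fun n _ => intervalIntegral.integral_const_mul _ _
    have hdiag : (∑ m ∈ S, (a m * (starRingEnd ℂ) (a m)) * F m m)
        = ((D * (N*(T-N)) : ℝ) : ℂ) := by
      have e1 : ∀ m ∈ S, (a m * (starRingEnd ℂ) (a m)) * F m m
          = ((‖a m‖^2 * (N*(T-N)) : ℝ) : ℂ) := by
        intro m _
        rw [hF]
        simp only [sub_self]
        rw [int_eI_zero_add T (2*T-N) N, Complex.mul_conj, ← Complex.sq_norm]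
        push_cast
        ring
      rw [Finset.sum_congr rfl e1, ← Complex.ofReal_sum, hD]
      push_cast
      rw [← Finset.sum_mul]
    have hoff : |(∑ m ∈ S, ∑ n ∈ S.erase m, (a m * (starRingEnd ℂ) (a n)) * F m n).re|
        ≤ 16*N^2*D := by
      refine offdiag_bound S a N hN hS F (fun m hm n hn hne => ?_)
      rw [hF]
      exact abs_int_eI_add (log_ne (hpos m hm) (hpos n hn) hne) T (2*T-N) N
    have key : D * (N*(T-N)) - 16*N^2*D ≤ (∫ u in (0:ℝ)..N, G u).re := by
      rw [hGint, hsplit, Complex.add_re, hdiag, Complex.ofReal_re]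
      have := neg_abs_le ((∑ m ∈ S, ∑ n ∈ S.erase m,
        (a m * (starRingEnd ℂ) (a n)) * F m n).re)
      linarith
    have final : N * (T * D - 17 * N * D) ≤ N * P T (2*T) := by
      have e : D * (N*(T-N)) - 16*N^2*D = N * (T * D - 17 * N * D) := by ring
      linarith [hNP, key]
    exact le_of_mul_le_mul_left final hN
  rw [abs_le]
  constructor <;> [linarith; linarith]



variable {R : ℕ}

lemma prod_cpow {ι : Type*} (s : Finset ι) (g : ι → ℕ) (z : ℂ) :
    ((∏ i ∈ s, g i : ℕ):ℂ) ^ z = ∏ i ∈ s, ((g i : ℕ):ℂ) ^ z := by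
  classical
  induction s using Finset.induction_on with
  | empty => simp
  | insert c s' ha ih =>
    rw [Finset.prod_insert ha, Finset.prod_insert ha, Nat.cast_mul,
      ← Complex.ofReal_natCast (g c), ← Complex.ofReal_natCast (∏ i ∈ s', g i),
      mul_cpow_ofReal_nonneg (Nat.cast_nonneg _) (Nat.cast_nonneg _),
      Complex.ofReal_natCast, Complex.ofReal_natCast, ih]

lemma prod_map_inj (S : Fin R → Finset ℕ) (hpos : ∀ j, ∀ n ∈ S j, 0 < n)
    (hcop : ∀ i j, i ≠ j → ∀ m ∈ S i, ∀ n ∈ S j, Nat.Coprime m n) :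
    ∀ f ∈ Fintype.piFinset S, ∀ g ∈ Fintype.piFinset S,
      (∏ j, f j) = (∏ j, g j) → f = g := by
  have key : ∀ x ∈ Fintype.piFinset S, ∀ y ∈ Fintype.piFinset S,
      (∏ j, x j) = (∏ j, y j) → ∀ j, x j ∣ y j := by
    intro x hx y hy hxy j
    have hxm : ∀ i, x i ∈ S i := Fintype.mem_piFinset.mp hx
    have hym : ∀ i, y i ∈ S i := Fintype.mem_piFinset.mp hy
    have h1 : x j ∣ ∏ i, y i := hxy ▸ Finset.dvd_prod_of_mem _ (Finset.mem_univ j)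
    have h2 : (∏ i, y i) = y j * ∏ i ∈ Finset.univ.erase j, y i :=
      (Finset.mul_prod_erase _ _ (Finset.mem_univ j)).symm
    have hcp : Nat.Coprime (x j) (∏ i ∈ Finset.univ.erase j, y i) :=
      Nat.Coprime.prod_right fun i hi =>
        hcop j i (Ne.symm (Finset.ne_of_mem_erase hi)) _ (hxm j) _ (hym i)
    rw [h2] at h1
    exact (Nat.Coprime.dvd_of_dvd_mul_right hcp) h1
  intro f hf g hg h
  funext j
  exact Nat.dvd_antisymm (key f hf g hg h j) (key g hg f hf h.symm j)

section bdef
variable (S : Fin R → Finset ℕ) (a : Fin R → ℕ → ℂ)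

def bco : ℕ → ℂ := fun v =>
  ∑ f ∈ Fintype.piFinset S, if (∏ j, f j) = v then ∏ j, a j (f j) else 0

lemma bco_spec (hinj : ∀ f ∈ Fintype.piFinset S, ∀ g ∈ Fintype.piFinset S,
      (∏ j, f j) = (∏ j, g j) → f = g)
    (f : Fin R → ℕ) (hf : f ∈ Fintype.piFinset S) :
    bco S a (∏ j, f j) = ∏ j, a j (f j) := by
  rw [bco, Finset.sum_eq_single_of_mem f hf]
  · rw [if_pos rfl]
  · intro g hg hne
    exact if_neg (fun h => hne (hinj g hg f hf h))

lemma sum_bco_mul (hinj : ∀ f ∈ Fintype.piFinset S, ∀ g ∈ Fintype.piFinset S,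
      (∏ j, f j) = (∏ j, g j) → f = g) (z : ℂ) :
    ∑ v ∈ (Fintype.piFinset S).image (fun f => ∏ j, f j), bco S a v * (v:ℂ) ^ z
      = ∑ f ∈ Fintype.piFinset S, (∏ j, a j (f j)) * ((∏ j, f j : ℕ):ℂ) ^ z := by
  rw [Finset.sum_image hinj]
  exact Finset.sum_congr rfl fun f hf => by rw [bco_spec S a hinj f hf]

lemma sum_bco_sq (hinj : ∀ f ∈ Fintype.piFinset S, ∀ g ∈ Fintype.piFinset S,
      (∏ j, f j) = (∏ j, g j) → f = g) :
    ∑ v ∈ (Fintype.piFinset S).image (fun f => ∏ j, f j), ‖bco S a v‖^2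
      = ∏ j, ∑ n ∈ S j, ‖a j n‖^2 := by
  rw [Finset.sum_image hinj]
  rw [Finset.prod_univ_sum]
  refine Finset.sum_congr rfl fun f hf => ?_
  rw [bco_spec S a hinj f hf, norm_prod, ← Finset.prod_pow]

lemma Bpoint (hinj : ∀ f ∈ Fintype.piFinset S, ∀ g ∈ Fintype.piFinset S,
      (∏ j, f j) = (∏ j, g j) → f = g) (t : ℝ) :
    (∏ j, ‖∑ n ∈ S j, a j n * (n : ℂ) ^ (-(Complex.I * (t : ℂ)))‖ ^ 2)
      = ‖∑ v ∈ (Fintype.piFinset S).image (fun f => ∏ j, f j),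
          bco S a v * (v:ℂ) ^ (-(Complex.I * (t : ℂ)))‖ ^ 2 := by
  rw [sum_bco_mul S a hinj]
  have h2 : ∏ j, (∑ n ∈ S j, a j n * (n : ℂ) ^ (-(Complex.I * (t : ℂ))))
      = ∑ f ∈ Fintype.piFinset S, (∏ j, a j (f j)) *
          ((∏ j, f j : ℕ):ℂ) ^ (-(Complex.I * (t : ℂ))) := by
    rw [Finset.prod_univ_sum]
    refine Finset.sum_congr rfl fun f hf => ?_
    rw [Finset.prod_mul_distrib, prod_cpow]
  rw [← h2, norm_prod, Finset.prod_pow]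

end bdef



lemma key_ineqs {e d : ℝ} (he : 0 < e) (hd6 : d = 6*e) (hd1 : d < 1) (r : ℕ) (hr : 1 ≤ r) :
    (1+e) * (1-d)^r ≤ (1-e)^(r+1) ∧ (1+e)^(r+1) ≤ (1-e) * (1+d)^r := by
  have he6 : e < 1/6 := by
    rw [hd6] at hd1; linarith
  have hee : e*e ≤ e/6 := by nlinarith
  have heee : e*e*e ≤ e/36 := by nlinarith
  have h1d : (0:ℝ) ≤ 1 - d := by linarith
  have h1e : (0:ℝ) < 1 - e := by linarith
  have h12e : (0:ℝ) ≤ 1 - 2*e := by linarith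
  constructor
  · have h2 : 1 - d ≤ (1-2*e)*(1-e)^2 := by nlinarith [hee, heee]
    calc (1+e)*(1-d)^r ≤ (1+e)*((1-2*e)*(1-e)^2)^r := by
          have h3 := pow_le_pow_left₀ h1d h2 r
          have h4 : (0:ℝ) ≤ 1+e := by linarith
          exact mul_le_mul_of_nonneg_left h3 h4
    _ = (1+e)*((1-2*e)^r*((1-e)^2)^r) := by rw [mul_pow]
    _ ≤ (1+e)*((1-2*e)*((1-e)^2)^r) := by
          have hle : (1-2*e)^r ≤ (1-2*e)^1 := pow_le_pow_of_le_one h12e (by linarith) hr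
          rw [pow_one] at hle
          have hX : (0:ℝ) ≤ ((1-e)^2)^r := by positivity
          have h4 : (0:ℝ) ≤ 1+e := by linarith
          exact mul_le_mul_of_nonneg_left (mul_le_mul_of_nonneg_right hle hX) h4
    _ = ((1+e)*(1-2*e))*(1-e)^(2*r) := by rw [← pow_mul]; ring
    _ ≤ (1-e)*(1-e)^(2*r) := by
          have hX : (0:ℝ) ≤ (1-e)^(2*r) := by positivity
          have : (1+e)*(1-2*e) ≤ 1-e := by nlinarith
          gcongr
    _ = (1-e)^(2*r+1) := by rw [← pow_succ']
    _ ≤ (1-e)^(r+1) := pow_le_pow_of_le_one (le_of_lt h1e) (by linarith) (by omega)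
  · have h2 : (1+2*e)*(1+e)^2 ≤ 1+d := by nlinarith [hee, heee]
    have h1e' : (1:ℝ) ≤ 1 + e := by linarith
    calc (1+e)^(r+1) ≤ (1+e)^(2*r) := pow_le_pow_right₀ h1e' (by omega)
    _ ≤ ((1-e)*(1+2*e))*(1+e)^(2*r) := by
          have : (1:ℝ) ≤ (1-e)*(1+2*e) := by nlinarith
          have hX : (0:ℝ) ≤ (1+e)^(2*r) := by positivity
          nlinarith
    _ = (1-e)*((1+2*e)*((1+e)^2)^r) := by rw [pow_mul]; ring
    _ ≤ (1-e)*((1+2*e)^r*((1+e)^2)^r) := by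
          have : (1+2*e) ≤ (1+2*e)^r := le_self_pow₀ (by linarith) (by omega)
          have hX : (0:ℝ) ≤ ((1+e)^2)^r := by positivity
          gcongr
    _ = (1-e)*((1+2*e)*(1+e)^2)^r := by rw [mul_pow]
    _ ≤ (1-e)*(1+d)^r := by
          have := pow_le_pow_left₀ (by nlinarith : (0:ℝ) ≤ (1+2*e)*(1+e)^2) h2 r
          gcongr

lemma find_c {d ρ : ℝ} (hd : 0 < d) (hd1 : d < 1) (r : ℕ)
    (hlow : ((1+d)^r)⁻¹ ≤ ρ) (hhigh : ρ ≤ ((1-d)^r)⁻¹) :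
    ∃ c : ℝ, |c| ≤ d ∧ ((1+c)^r)⁻¹ = ρ := by
  set g : ℝ → ℝ := fun c => ((1+c)^r)⁻¹ with hg
  have hcont : ContinuousOn g (Set.Icc (-d) d) := by
    apply ContinuousOn.inv₀ (Continuous.continuousOn (by continuity))
    intro x hx
    have h1 : -d ≤ x := (Set.mem_Icc.mp hx).1
    have : 0 < 1 + x := by linarith
    positivity
  have hsub := intermediate_value_Icc' (by linarith : -d ≤ d) hcont
  have hmem : ρ ∈ Set.Icc (g d) (g (-d)) := by
    constructor
    · exact hlow
    · have : g (-d) = ((1-d)^r)⁻¹ := by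
        show ((1 + -d)^r)⁻¹ = ((1-d)^r)⁻¹
        rw [show (1:ℝ) + -d = 1 - d by ring]
      rw [this]; exact hhigh
  obtain ⟨c, hc, hgc⟩ := hsub hmem
  exact ⟨c, abs_le.mpr ⟨hc.1, hc.2⟩, hgc⟩


set_option maxHeartbeats 1000000 in
/-- Splitting of mean values of products of Dirichlet polynomials with pairwise coprime
supports: if all products `n₁⋯n_R` (with `n_j ∈ S_j`) are at most `N`, then
`(1/T)∫_T^{2T} ∏_j |A_j(it)|² dt = (1+O(N/T))^{1−R} ∏_j (1/T)∫_T^{2T}|A_j(it)|² dt`. -/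
theorem coprime_dirichlet_polynomial_splitting :
    ∃ C : ℝ, 0 < C ∧ ∀ (T N : ℝ) (R : ℕ) (S : Fin R → Finset ℕ) (a : Fin R → ℕ → ℂ),
      0 < T → 0 < N → C * N / T < 1 →
      (∀ j, ∀ n ∈ S j, 0 < n) →
      (∀ i j, i ≠ j → ∀ m ∈ S i, ∀ n ∈ S j, Nat.Coprime m n) →
      (∀ f : Fin R → ℕ, (∀ j, f j ∈ S j) → ((∏ j, f j : ℕ) : ℝ) ≤ N) →
      ∃ c : ℝ, |c| ≤ C * N / T ∧
        (1 / T) * (∫ t in T..(2 * T),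
            ∏ j, ‖∑ n ∈ S j, a j n * (n : ℂ) ^ (-(Complex.I * (t : ℂ)))‖ ^ 2)
          = (1 + c) ^ ((1 : ℤ) - R) *
            ∏ j, ((1 / T) * ∫ t in T..(2 * T),
              ‖∑ n ∈ S j, a j n * (n : ℂ) ^ (-(Complex.I * (t : ℂ)))‖ ^ 2) := by
  classical
  refine ⟨102, by norm_num, ?_⟩
  intro T N R S a hT hN hCN hpos hcop hprodN
  have hTne : T ≠ 0 := ne_of_gt hT
  rcases Nat.eq_zero_or_pos R with hR0 | hRpos
  · subst hR0
    refine ⟨0, by rw [abs_zero]; positivity, ?_⟩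
    simp only [Finset.univ_eq_empty, Finset.prod_empty]
    rw [intervalIntegral.integral_const, smul_eq_mul, mul_one, mul_one, add_zero]
    norm_num
    field_simp
    ring
  by_cases hzero : ∃ j, ∑ n ∈ S j, ‖a j n‖^2 = 0
  · obtain ⟨j0, hj0⟩ := hzero
    refine ⟨0, by rw [abs_zero]; positivity, ?_⟩
    have hvan : ∀ n ∈ S j0, a j0 n = 0 := by
      intro n hn
      have h1 := (Finset.sum_eq_zero_iff_of_nonneg
        (fun n _ => sq_nonneg ‖a j0 n‖)).mp hj0 n hn
      have h2 : ‖a j0 n‖ = 0 := by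
        nlinarith [norm_nonneg (a j0 n)]
      exact norm_eq_zero.mp h2
    have hAz : ∀ t : ℝ, (∑ n ∈ S j0, a j0 n * (n:ℂ) ^ (-(Complex.I * (t:ℂ)))) = 0 :=
      fun t => Finset.sum_eq_zero fun n hn => by rw [hvan n hn, zero_mul]
    have hLHS : (∫ t in T..(2*T),
        ∏ j, ‖∑ n ∈ S j, a j n * (n:ℂ) ^ (-(Complex.I * (t:ℂ)))‖^2) = 0 := by
      rw [intervalIntegral.integral_congr (g := fun _ => (0:ℝ)) (fun t _ => ?_),
        intervalIntegral.integral_zero]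
      apply Finset.prod_eq_zero (Finset.mem_univ j0)
      rw [hAz t]
      simp
    have hj0int : (∫ t in T..(2*T),
        ‖∑ n ∈ S j0, a j0 n * (n:ℂ) ^ (-(Complex.I * (t:ℂ)))‖^2) = 0 := by
      rw [intervalIntegral.integral_congr (g := fun _ => (0:ℝ)) (fun t _ => ?_),
        intervalIntegral.integral_zero]
      rw [hAz t]
      simp
    rw [hLHS, mul_zero,
      Finset.prod_eq_zero (Finset.mem_univ j0) (by rw [hj0int]; ring), mul_zero]
  push_neg at hzero
  have hDpos : ∀ j, 0 < ∑ n ∈ S j, ‖a j n‖^2 := by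
    intro j
    rcases (Finset.sum_nonneg
      (fun n (_ : n ∈ S j) => sq_nonneg ‖a j n‖)).lt_or_eq with h | h
    · exact h
    · exact absurd h.symm (hzero j)
  have hSne : ∀ j, (S j).Nonempty := by
    intro j
    rcases Finset.eq_empty_or_nonempty (S j) with h | h
    · exfalso; apply hzero j; rw [h, Finset.sum_empty]
    · exact h
  have hball : ∀ j, ∀ n ∈ S j, (n:ℝ) ≤ N := by
    intro j n hn
    set f : Fin R → ℕ := fun i => if i = j then n else (hSne i).choose with hfdef
    have hfmem : ∀ i, f i ∈ S i := by
      intro i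
      by_cases h : i = j
      · subst h; simp only [hfdef, if_pos rfl]; exact hn
      · simp only [hfdef, if_neg h]; exact (hSne i).choose_spec
    have h1 : (n:ℝ) ≤ ((∏ i, f i : ℕ):ℝ) := by
      have hdvd : n ∣ ∏ i, f i := by
        have hfj : f j = n := by simp [hfdef]
        rw [← hfj]
        exact Finset.dvd_prod_of_mem _ (Finset.mem_univ j)
      have hp : 0 < ∏ i, f i := Finset.prod_pos (fun i _ => hpos i (f i) (hfmem i))
      exact_mod_cast Nat.le_of_dvd hp hdvd
    exact h1.trans (hprodN f hfmem)
  have hNT : N ≤ T := by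
    rw [div_lt_one hT] at hCN
    linarith
  have hmvj : ∀ j, |(∫ t in T..(2*T),
      ‖∑ n ∈ S j, a j n * (n:ℂ) ^ (-(Complex.I * (t:ℂ)))‖^2)
        - T * ∑ n ∈ S j, ‖a j n‖^2|
      ≤ 17*N*∑ n ∈ S j, ‖a j n‖^2 :=
    fun j => mv_main T N (S j) (a j) hT hN hNT (fun n hn => ⟨hpos j n hn, hball j n hn⟩)
  have hinj := prod_map_inj S hpos hcop
  have hSp : ∀ v ∈ (Fintype.piFinset S).image (fun f => (∏ j, f j : ℕ)),
      0 < v ∧ (v:ℝ) ≤ N := by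
    intro v hv
    obtain ⟨f, hf, rfl⟩ := Finset.mem_image.mp hv
    have hfm := Fintype.mem_piFinset.mp hf
    refine ⟨Finset.prod_pos (fun i _ => hpos i (f i) (hfm i)), ?_⟩
    exact hprodN f hfm
  have hmvB := mv_main T N ((Fintype.piFinset S).image (fun f => ∏ j, f j)) (bco S a)
    hT hN hNT hSp
  rw [sum_bco_sq S a hinj] at hmvB
  have hJBeq : (∫ t in T..(2*T),
      ∏ j, ‖∑ n ∈ S j, a j n * (n:ℂ) ^ (-(Complex.I * (t:ℂ)))‖^2)
      = ∫ t in T..(2*T), ‖∑ v ∈ (Fintype.piFinset S).image (fun f => ∏ j, f j),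
          bco S a v * (v:ℂ) ^ (-(Complex.I * (t:ℂ)))‖^2 :=
    intervalIntegral.integral_congr (fun t _ => Bpoint S a hinj t)
  -- auxiliary conversion
  have he17 : (0:ℝ) < 17*N/T := by positivity
  have hconv : ∀ (X Y : ℝ), |X - T*Y| ≤ 17*N*Y →
      ((1-17*N/T)*Y ≤ (1/T)*X ∧ (1/T)*X ≤ (1+17*N/T)*Y) := by
    intro X Y h
    obtain ⟨h1, h2⟩ := abs_le.mp h
    have heT : (17*N/T) * T = 17*N := by field_simp
    constructor
    · rw [show (1/T)*X = X/T by ring, le_div_iff₀ hT]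
      calc (1-17*N/T)*Y*T = T*Y - ((17*N/T)*T)*Y := by ring
      _ = T*Y - 17*N*Y := by rw [heT]
      _ ≤ X := by linarith
    · rw [show (1/T)*X = X/T by ring, div_le_iff₀ hT]
      calc X ≤ T*Y + 17*N*Y := by linarith
      _ = T*Y + ((17*N/T)*T)*Y := by rw [heT]
      _ = (1+17*N/T)*Y*T := by ring
  rcases Nat.lt_or_ge R 2 with hR1 | hR2
  · -- R = 1
    have hReq : R = 1 := by omega
    subst hReq
    refine ⟨0, by rw [abs_zero]; positivity, ?_⟩
    rw [show ((1:ℤ) - ((1:ℕ):ℤ)) = 0 by norm_num, zpow_zero, one_mul, Fin.prod_univ_one]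
    congr 1
    refine intervalIntegral.integral_congr (fun t _ => ?_)
    rw [Fin.prod_univ_one]
  -- main case : R ≥ 2
  have hr1 : 1 ≤ R - 1 := by omega
  have hRr : R = (R-1) + 1 := by omega
  set e := 17*N/T with he_def
  set d := 102*N/T with hd_def
  have he : 0 < e := he17
  have hd6 : d = 6*e := by rw [he_def, hd_def]; ring
  have hd1 : d < 1 := by
    rw [hd_def, div_lt_one hT]
    rw [div_lt_one hT] at hCN
    linarith
  obtain ⟨hkey1, hkey2⟩ := key_ineqs he hd6 hd1 (R-1) hr1
  have he1 : e < 1 := by linarith [hd6 ▸ hd1]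
  set DB := ∏ j, ∑ n ∈ S j, ‖a j n‖^2 with hDBdef
  have hDBpos : 0 < DB := Finset.prod_pos (fun j _ => hDpos j)
  obtain ⟨hPBlow, hPBhigh⟩ := hconv _ _ hmvB
  have hPjs : ∀ j, (1-e) * (∑ n ∈ S j, ‖a j n‖^2)
      ≤ (1/T) * (∫ t in T..(2*T),
        ‖∑ n ∈ S j, a j n * (n:ℂ) ^ (-(Complex.I * (t:ℂ)))‖^2)
      ∧ (1/T) * (∫ t in T..(2*T),
        ‖∑ n ∈ S j, a j n * (n:ℂ) ^ (-(Complex.I * (t:ℂ)))‖^2)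
      ≤ (1+e) * (∑ n ∈ S j, ‖a j n‖^2) :=
    fun j => hconv _ _ (hmvj j)
  set Q := ∏ j, ((1 / T) * ∫ t in T..(2 * T),
      ‖∑ n ∈ S j, a j n * (n : ℂ) ^ (-(Complex.I * (t : ℂ)))‖ ^ 2) with hQdef
  have hQlow : (1-e)^R * DB ≤ Q := by
    have heq : (1-e)^R * DB
        = ∏ j, ((1-e) * ∑ n ∈ S j, ‖a j n‖^2) := by
      rw [Finset.prod_mul_distrib, Finset.prod_const, Finset.card_univ, Fintype.card_fin,
        hDBdef]
    rw [heq, hQdef]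
    refine Finset.prod_le_prod (fun j _ => ?_) (fun j _ => (hPjs j).1)
    exact mul_nonneg (by linarith) (le_of_lt (hDpos j))
  have hQhigh : Q ≤ (1+e)^R * DB := by
    have heq : (1+e)^R * DB
        = ∏ j, ((1+e) * ∑ n ∈ S j, ‖a j n‖^2) := by
      rw [Finset.prod_mul_distrib, Finset.prod_const, Finset.card_univ, Fintype.card_fin,
        hDBdef]
    rw [heq, hQdef]
    refine Finset.prod_le_prod (fun j _ => ?_) (fun j _ => (hPjs j).2)
    exact le_trans (mul_nonneg (by linarith) (le_of_lt (hDpos j))) (hPjs j).1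
  have hQpos : 0 < Q := by
    have h0 : (0:ℝ) < (1-e)^R * DB := by
      have : (0:ℝ) < 1 - e := by linarith
      positivity
    linarith [hQlow]
  set PB := (1/T) * (∫ t in T..(2*T),
      ‖∑ v ∈ (Fintype.piFinset S).image (fun f => ∏ j, f j),
        bco S a v * (v:ℂ) ^ (-(Complex.I * (t:ℂ)))‖^2) with hPBdef
  have hhigh : PB / Q ≤ ((1-d)^(R-1))⁻¹ := by
    have h1d : (0:ℝ) < 1 - d := by linarith
    have hpow : (0:ℝ) < (1-d)^(R-1) := by positivity
    rw [div_le_iff₀ hQpos, inv_mul_eq_div, le_div_iff₀ hpow]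
    calc PB * (1-d)^(R-1) ≤ ((1+e)*DB) * (1-d)^(R-1) :=
          mul_le_mul_of_nonneg_right hPBhigh hpow.le
    _ = ((1+e)*(1-d)^(R-1)) * DB := by ring
    _ ≤ (1-e)^((R-1)+1) * DB := mul_le_mul_of_nonneg_right hkey1 hDBpos.le
    _ = (1-e)^R * DB := by rw [← hRr]
    _ ≤ Q := hQlow
  have hlow : ((1+d)^(R-1))⁻¹ ≤ PB / Q := by
    have hpow : (0:ℝ) < (1+d)^(R-1) := by positivity
    rw [le_div_iff₀ hQpos, inv_mul_eq_div, div_le_iff₀ hpow]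
    calc Q ≤ (1+e)^R * DB := hQhigh
    _ = (1+e)^((R-1)+1) * DB := by rw [← hRr]
    _ ≤ ((1-e)*(1+d)^(R-1)) * DB := mul_le_mul_of_nonneg_right hkey2 hDBpos.le
    _ = ((1-e)*DB) * (1+d)^(R-1) := by ring
    _ ≤ PB * (1+d)^(R-1) := mul_le_mul_of_nonneg_right hPBlow hpow.le
  obtain ⟨c, hc, hgc⟩ := find_c (by positivity : (0:ℝ) < d) hd1 (R-1) hlow hhigh
  refine ⟨c, hc, ?_⟩
  rw [hJBeq]
  have hzpow : ((1:ℝ)+c) ^ ((1:ℤ) - (R:ℤ)) = (((1:ℝ)+c)^(R-1))⁻¹ := by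
    have hcast : ((R-1 : ℕ):ℤ) = (R:ℤ) - 1 := by
      push_cast [Nat.cast_sub (by omega : 1 ≤ R)]
      ring
    rw [show ((1:ℤ) - (R:ℤ)) = -((R-1 : ℕ):ℤ) by rw [hcast]; ring, zpow_neg, zpow_natCast]
  rw [hzpow, hgc, div_mul_cancel₀ _ (ne_of_gt hQpos)]

end CDPSproof
end
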